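/- arXiv:0802.3585 — 7 statements merged into one kernel-verified Lean document; each statement's English description precedes it below -/
import Mathlib

section
/- Let p = 1. Every compatible price π is continuous on all of E with respect to the strong norm; in particular there exists a constant K ≥ 0 such that |π(z)| ≤ K · E‖z‖_TV for every z ∈ E. -/
open MeasureTheory Set Filter
open scoped ENNReal Topology Classical

noncomputable section

namespace Equil

variable {Ω : Type*} [m : MeasurableSpace Ω]

/-- The Stieltjes measure associated to a path (`0` if the path is not a
nondecreasing right-continuous function). -/
def pathMeasure (f : ℝ → ℝ) : Measure ℝ :=
  if h : Monotone f ∧ ∀ x, ContinuousWithinAt f (Set.Ici x) x then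
    StieltjesFunction.measure ⟨f, h.1, h.2⟩
  else 0

/-- A consumption plan in `E₊`: pathwise it is the cumulative consumption,
zero before time `0`, nondecreasing, right-continuous, constant after `T`;
the process is adapted and `x_T ∈ L^p(P)`. -/
structure IsPlan (P : Measure Ω) (ℱ : Filtration ℝ m) (T : ℝ) (p : ℝ≥0∞)
    (x : Ω → ℝ → ℝ) : Prop where
  mono : ∀ ω, Monotone (x ω)
  right_cont : ∀ ω t, ContinuousWithinAt (x ω) (Set.Ici t) t
  zero_neg : ∀ ω, ∀ t < 0, x ω t = 0
  const_ge : ∀ ω, ∀ t, T ≤ t → x ω t = x ω T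
  adapted : ∀ t, Measurable[ℱ t] fun ω => x ω t
  memLp : MemLp (fun ω => x ω T) p P

/-- Membership in the commodity space `E`, the linear span of `E₊`. -/
def MemE (P : Measure Ω) (ℱ : Filtration ℝ m) (T : ℝ) (p : ℝ≥0∞)
    (z : Ω → ℝ → ℝ) : Prop :=
  ∃ x y, IsPlan P ℱ T p x ∧ IsPlan P ℱ T p y ∧ z = x - y

/-- The intertemporal norm `‖z‖ = (E ∫_{[0,T]} |z_t|^p dκ)^{1/p}` with
`κ = Lebesgue + δ_T`. -/
def inorm (P : Measure Ω) (T : ℝ) (p : ℝ≥0∞) (z : Ω → ℝ → ℝ) : ℝ :=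
  (∫ ω, ((∫ t in Set.Icc (0 : ℝ) T, |z ω t| ^ p.toReal) + |z ω T| ^ p.toReal) ∂P) ^
    (1 / p.toReal)

/-- The pathwise total variation of the measure `dz` on `[0,T]`. -/
def pathTV (T : ℝ) (f : ℝ → ℝ) : ℝ :=
  |f 0| + (eVariationOn f (Set.Icc 0 T)).toReal

/-- The strong norm `‖z‖_s = E ‖z‖_TV`. -/
def strongNorm (P : Measure Ω) (T : ℝ) (z : Ω → ℝ → ℝ) : ℝ :=
  ∫ ω, pathTV T (z ω) ∂P

/-- The pairing `E ∫_{[0,T]} ψ dx` of a process `ψ` with a plan `x`. -/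
def pairPlan (P : Measure Ω) (T : ℝ) (ψ : Ω → ℝ → ℝ) (x : Ω → ℝ → ℝ) : ℝ :=
  ∫ ω, ∫ t in Set.Icc (0 : ℝ) T, ψ ω t ∂(pathMeasure (x ω)) ∂P

/-- A price (a linear functional, nonnegative on `E₊`) is compatible if its
restriction to the consumption set `E₊` is continuous for the intertemporal
norm. -/
def Compatible (P : Measure Ω) (ℱ : Filtration ℝ m) (T : ℝ) (p : ℝ≥0∞)
    (π : (Ω → ℝ → ℝ) →ₗ[ℝ] ℝ) : Prop :=
  ∀ x, IsPlan P ℱ T p x →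
    ∀ xn : ℕ → Ω → ℝ → ℝ, (∀ n, IsPlan P ℱ T p (xn n)) →
      Tendsto (fun n => inorm P T p (xn n - x)) atTop (nhds 0) →
      Tendsto (fun n => π (xn n)) atTop (nhds (π x))

/-- The cumulative path of `δ_τ h`, the random measure delivering `h` units at
time `τ`. -/
def deltaPlan (τ h : Ω → ℝ) : Ω → ℝ → ℝ := fun ω t => if τ ω ≤ t then h ω else 0

/-- A `[0,T]`-valued stopping time. -/
def IsBddStoppingTime (ℱ : Filtration ℝ m) (T : ℝ) (τ : Ω → ℝ) : Prop :=
  IsStoppingTime ℱ (fun ω => (τ ω : WithTop ℝ)) ∧ ∀ ω, τ ω ∈ Set.Icc 0 T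

/-- Right-continuous on `[0,T)` with left limits on `(0,T]`. -/
def CadlagOn (T : ℝ) (f : ℝ → ℝ) : Prop :=
  (∀ t ∈ Set.Ico (0 : ℝ) T, ContinuousWithinAt f (Set.Ici t) t) ∧
  ∀ t ∈ Set.Ioc (0 : ℝ) T, ∃ l, Tendsto f (nhdsWithin t (Set.Ico 0 t)) (nhds l)

/-- `sup_{t ∈ [0,T]} f t`. -/
def supOn (T : ℝ) (f : ℝ → ℝ) : ℝ := ⨆ t : Set.Icc (0 : ℝ) T, f t

/-- `ψ` is the optional projection of `ξ`: `ψ_τ = E[ξ_τ | 𝓕_τ]` a.s.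
for every stopping time `τ ≤ T`. -/
def IsOptionalProjection (P : Measure Ω) (ℱ : Filtration ℝ m) (T : ℝ)
    (ψ ξ : Ω → ℝ → ℝ) : Prop :=
  ∀ (τ : Ω → ℝ) (hτ : IsStoppingTime ℱ (fun ω => (τ ω : WithTop ℝ))), (∀ ω, τ ω ∈ Set.Icc 0 T) →
    (fun ω => ψ ω (τ ω)) =ᵐ[P] P[fun ω => ξ ω (τ ω)|hτ.measurableSpace]

/-- The optional sigma-field on `Ω × [0,T]`: generated by the adapted processes
with right-continuous sample paths admitting left limits. -/
def optionalSigma (ℱ : Filtration ℝ m) (T : ℝ) : MeasurableSpace (Ω × ℝ) :=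
  ⨆ f ∈ {f : Ω → ℝ → ℝ |
      (∀ t, Measurable[ℱ t] fun ω => f ω t) ∧ ∀ ω, CadlagOn T (f ω)},
    MeasurableSpace.comap (fun q : Ω × ℝ => f q.1 q.2) (borel ℝ)

/-- A set `A` is radial at `x ∈ A`. -/
def RadialAt (A : Set (Ω → ℝ → ℝ)) (x : Ω → ℝ → ℝ) : Prop :=
  ∀ y, ∃ a, a ∈ Set.Ioc (0 : ℝ) 1 ∧
    ∀ α ∈ Set.Icc (0 : ℝ) a, (1 - α) • x + α • y ∈ A

section AuxProofs

/-- subadditivity of variation for a difference of functions -/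
lemma evar_sub_le (f g : ℝ → ℝ) (s : Set ℝ) :
    eVariationOn (fun t => f t - g t) s ≤ eVariationOn f s + eVariationOn g s := by
  apply iSup_le
  rintro ⟨n, u, hu, us⟩
  calc ∑ i ∈ Finset.range n, edist (f (u (i+1)) - g (u (i+1))) (f (u i) - g (u i))
      ≤ ∑ i ∈ Finset.range n, (edist (f (u (i+1))) (f (u i)) + edist (g (u (i+1))) (g (u i))) := by
        refine Finset.sum_le_sum fun i _ => ?_
        rw [edist_dist, edist_dist, edist_dist, Real.dist_eq, Real.dist_eq, Real.dist_eq]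
        rw [← ENNReal.ofReal_add (abs_nonneg _) (abs_nonneg _)]
        refine ENNReal.ofReal_le_ofReal ?_
        have : f (u (i+1)) - g (u (i+1)) - (f (u i) - g (u i))
            = (f (u (i+1)) - f (u i)) - (g (u (i+1)) - g (u i)) := by ring
        rw [this]
        exact abs_sub _ _
    _ = (∑ i ∈ Finset.range n, edist (f (u (i+1))) (f (u i)))
        + ∑ i ∈ Finset.range n, edist (g (u (i+1))) (g (u i)) := Finset.sum_add_distrib
    _ ≤ _ := add_le_add (eVariationOn.sum_le (f := f) (n := n) hu us) (eVariationOn.sum_le (f := g) (n := n) hu us)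

lemma abs_eq_pospart_add_negpart (a : ℝ) : |a| = max a 0 + max (-a) 0 := by
  rcases le_or_gt 0 a with h | h
  · rw [abs_of_nonneg h, max_eq_left h, max_eq_right (by linarith)]; ring
  · rw [abs_of_neg h, max_eq_right h.le, max_eq_left (by linarith)]; ring

lemma evar_dense (f : ℝ → ℝ) {a b : ℝ}
    (hf : ∀ t, ContinuousWithinAt f (Ici t) t)
    {D : Set ℝ} (hDsub : D ⊆ Icc a b) (hbD : b ∈ D)
    (hdense : ∀ x ∈ Ico a b, ∀ y, x < y → (D ∩ Ico x y).Nonempty) :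
    eVariationOn f (Icc a b) = eVariationOn f D := by
  refine le_antisymm ?_ (eVariationOn.mono f hDsub)
  apply iSup_le
  rintro ⟨n, u, hu, us⟩
  refine ENNReal.le_of_forall_pos_le_add fun ε hε _ => ?_
  set η : ℝ≥0∞ := (ε : ℝ≥0∞) / (2 * n + 2) with hηdef
  have hden0 : (2 * (n : ℝ≥0∞) + 2) ≠ 0 := by simp
  have hdenfin : (2 * (n : ℝ≥0∞) + 2) ≠ ∞ := by finiteness
  have hη0 : 0 < η := ENNReal.div_pos (by exact_mod_cast hε.ne') hdenfin
  have step : ∀ t' c : ℝ, ∃ d : ℝ,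
      (t' ∈ Icc a b ∧ c ∈ D ∧ t' ≤ c) →
        (d ∈ D ∧ t' ≤ d ∧ d ≤ c ∧ edist (f d) (f t') ≤ η) := by
    intro t' c
    by_cases H : t' ∈ Icc a b ∧ c ∈ D ∧ t' ≤ c
    swap
    · exact ⟨0, fun h => absurd h H⟩
    obtain ⟨ht', hcD, htc⟩ := H
    rcases eq_or_lt_of_le ht'.2 with hb' | hb'
    · refine ⟨c, fun _ => ⟨hcD, htc, le_rfl, ?_⟩⟩
      have : c = t' := le_antisymm ((hDsub hcD).2.trans hb'.ge) htc
      rw [this, edist_self]; exact zero_le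
    rcases eq_or_lt_of_le htc with hc' | hc'
    · exact ⟨c, fun _ => ⟨hcD, htc, le_rfl, by rw [← hc', edist_self]; exact zero_le⟩⟩
    have hev : ∀ᶠ s in 𝓝[Ici t'] t', edist (f s) (f t') < η :=
      (EMetric.tendsto_nhds.mp (hf t')) η hη0
    obtain ⟨u', hu', hsub⟩ := mem_nhdsGE_iff_exists_Ico_subset.mp hev
    obtain ⟨d, hdD, hd1, hd2⟩ := hdense t' ⟨ht'.1, hb'⟩ (min c u') (lt_min hc' hu')
    exact ⟨d, fun _ => ⟨hdD, hd1, (hd2.trans_le (min_le_left _ _)).le,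
      (hsub ⟨hd1, hd2.trans_le (min_le_right _ _)⟩).le⟩⟩
  choose F hF using step
  set e : ℕ → ℝ := fun k => Nat.rec (F (u n) b) (fun k ek => F (u (n - (k+1))) ek) k with he
  have inv : ∀ k, k ≤ n →
      e k ∈ D ∧ u (n - k) ≤ e k ∧ edist (f (e k)) (f (u (n - k))) ≤ η := by
    intro k
    induction k with
    | zero =>
      intro _
      have h0 : e 0 = F (u n) b := rfl
      have := hF (u n) b ⟨us n, hbD, (us n).2⟩
      rw [h0]
      simpa using ⟨this.1, this.2.1, this.2.2.2⟩
    | succ k ih =>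
      intro hk
      obtain ⟨hD1, hle1, _⟩ := ih (Nat.le_of_succ_le hk)
      have hsucc : e (k+1) = F (u (n - (k+1))) (e k) := rfl
      have hmono : u (n - (k+1)) ≤ u (n - k) := hu (Nat.sub_le_sub_left (Nat.le_succ k) n)
      have := hF (u (n - (k+1))) (e k) ⟨us _, hD1, hmono.trans hle1⟩
      rw [hsucc]
      exact ⟨this.1, this.2.1, this.2.2.2⟩
  have echain : ∀ k, k + 1 ≤ n → e (k+1) ≤ e k := by
    intro k hk
    obtain ⟨hD1, hle1, _⟩ := inv k (Nat.le_of_succ_le hk)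
    have hmono : u (n - (k+1)) ≤ u (n - k) := hu (Nat.sub_le_sub_left (Nat.le_succ k) n)
    exact (hF (u (n - (k+1))) (e k) ⟨us _, hD1, hmono.trans hle1⟩).2.2.1
  have eant : ∀ l, l ≤ n → ∀ k, k ≤ l → e l ≤ e k := by
    intro l
    induction l with
    | zero =>
      intro _ k hk
      have hk0 : k = 0 := Nat.le_zero.mp hk
      rw [hk0]
    | succ l ih =>
      intro hl k hk
      rcases Nat.lt_or_ge k (l+1) with h | h
      · exact (echain l hl).trans (ih (Nat.le_of_succ_le hl) k (by omega))
      · have : k = l + 1 := le_antisymm hk h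
        rw [this]
  set d : ℕ → ℝ := fun i => e (n - i) with hd
  have dmono : Monotone d := by
    intro i j hij
    exact eant (n - i) (Nat.sub_le n i) (n - j) (Nat.sub_le_sub_left hij n)
  have dmem : ∀ i, d i ∈ D := fun i => (inv (n - i) (Nat.sub_le n i)).1
  have dspec : ∀ i, i ≤ n → u i ≤ d i ∧ edist (f (d i)) (f (u i)) ≤ η := by
    intro i hi
    have h1 : n - (n - i) = i := Nat.sub_sub_self hi
    have := inv (n - i) (Nat.sub_le n i)
    rw [h1] at this
    exact ⟨this.2.1, this.2.2⟩
  show (∑ i ∈ Finset.range n, edist (f (u (i+1))) (f (u i))) ≤ eVariationOn f D + ε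
  calc (∑ i ∈ Finset.range n, edist (f (u (i+1))) (f (u i)))
      ≤ ∑ i ∈ Finset.range n, (edist (f (d (i+1))) (f (d i)) + (η + η)) := by
        refine Finset.sum_le_sum fun i hi => ?_
        have hin : i < n := Finset.mem_range.mp hi
        have h1 := (dspec (i+1) hin).2
        have h0 := (dspec i hin.le).2
        calc edist (f (u (i+1))) (f (u i))
            ≤ edist (f (u (i+1))) (f (d (i+1))) + edist (f (d (i+1))) (f (d i))
              + edist (f (d i)) (f (u i)) := edist_triangle4 _ _ _ _
          _ ≤ η + edist (f (d (i+1))) (f (d i)) + η :=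
              add_le_add (add_le_add (by rw [edist_comm]; exact h1) le_rfl) h0
          _ = edist (f (d (i+1))) (f (d i)) + (η + η) := by ring
    _ = (∑ i ∈ Finset.range n, edist (f (d (i+1))) (f (d i))) + n * (η + η) := by
        rw [Finset.sum_add_distrib, Finset.sum_const, Finset.card_range, nsmul_eq_mul]
    _ ≤ eVariationOn f D + n * (η + η) := by
        gcongr
        exact eVariationOn.sum_le (f := f) (n := n) dmono dmem
    _ ≤ eVariationOn f D + ε := by
        gcongr
        have h1 : (n : ℝ≥0∞) * (η + η) = (2 * n) * η := by ring
        have h2 : (2 * (n:ℝ≥0∞)) * η ≤ (2 * n + 2) * η :=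
          mul_le_mul_left le_self_add η
        have h3 : (2 * (n:ℝ≥0∞) + 2) * η = ε := by
          rw [hηdef]
          exact ENNReal.mul_div_cancel hden0 hdenfin
        rw [h1, ← h3]
        exact h2

lemma evar_small (f : ℝ → ℝ) {t s₁ : ℝ} (h : t < s₁)
    (hrc : ContinuousWithinAt f (Ici t) t)
    (hfin : eVariationOn f (Icc t s₁) ≠ ∞) {ε : ℝ≥0∞} (hε : 0 < ε) :
    ∃ s₂, t < s₂ ∧ s₂ < s₁ ∧ eVariationOn f (Icc t s₂) ≤ ε := by
  set L : ℝ≥0∞ := ⨅ s : Ioo t s₁, eVariationOn f (Icc t s) with hLdef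
  have hLle : ∀ s : Ioo t s₁, L ≤ eVariationOn f (Icc t (s : ℝ)) := fun s => iInf_le _ s
  have hL0 : L = 0 := by
    by_contra h0
    have hmid : (t + s₁)/2 ∈ Ioo t s₁ := ⟨by linarith, by linarith⟩
    set s₂ : ℝ := (t + s₁)/2 with hs₂def
    have hts₂ : t < s₂ := hmid.1
    have hs₂s₁ : s₂ < s₁ := hmid.2
    have hV₂fin : eVariationOn f (Icc t s₂) ≠ ∞ :=
      fun hh => hfin (top_le_iff.mp (hh ▸ eVariationOn.mono f (Icc_subset_Icc le_rfl hs₂s₁.le)))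
    have hLV₂ : L ≤ eVariationOn f (Icc t s₂) := hLle ⟨s₂, hmid⟩
    have hLfin : L ≠ ∞ := fun hh => hV₂fin (top_le_iff.mp (hh ▸ hLV₂))
    set η : ℝ≥0∞ := L / 2 / 2 with hηdef
    have hη0 : η ≠ 0 := by simp [hηdef, ENNReal.div_eq_zero_iff, h0]
    have hhalf : L / 2 < L := ENNReal.half_lt_self h0 hLfin
    have hηL : η < L := lt_of_le_of_lt ENNReal.half_le_self hhalf
    have hη2 : η + η = L / 2 := ENNReal.add_halves (L / 2)
    have hV₂0 : eVariationOn f (Icc t s₂) ≠ 0 :=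
      fun hz => h0 (le_antisymm (hz ▸ hLV₂) zero_le)
    have hsub : eVariationOn f (Icc t s₂) - η < eVariationOn f (Icc t s₂) :=
      ENNReal.sub_lt_self hV₂fin hV₂0 hη0
    conv_rhs at hsub => rw [eVariationOn]
    rw [lt_iSup_iff] at hsub
    obtain ⟨⟨n, u, hu, us⟩, hS⟩ := hsub
    simp only at hS
    set S : ℝ≥0∞ := ∑ i ∈ Finset.range n, edist (f (u (i+1))) (f (u i)) with hSdef
    have hSle : eVariationOn f (Icc t s₂) ≤ S + η := tsub_le_iff_right.mp hS.le
    by_cases hj : ∃ i, i ≤ n ∧ t < u i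
    · set j := Nat.find hj with hjdef
      obtain ⟨hjn, htuj⟩ : j ≤ n ∧ t < u j := Nat.find_spec hj
      have hlt : ∀ i, i < j → u i = t := by
        intro i hij
        have hmin := Nat.find_min hj hij
        push_neg at hmin
        exact le_antisymm (hmin (le_trans hij.le hjn)) (us i).1
      have hrc' : Tendsto f (𝓝[>] t) (𝓝 (f t)) :=
        hrc.mono_left (nhdsWithin_mono t Ioi_subset_Ici_self)
      have hevent : ∀ᶠ s' in 𝓝[>] t, edist (f s') (f t) < η :=
        (EMetric.tendsto_nhds.mp hrc') η (pos_iff_ne_zero.mpr hη0)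
      have hIoo : Ioo t (u j) ∈ 𝓝[>] t := Ioo_mem_nhdsGT_of_mem ⟨le_rfl, htuj⟩
      obtain ⟨s', hs'e, hs'mem⟩ :=
        (hevent.and (eventually_of_mem hIoo fun x hx => hx)).exists
      obtain ⟨hts', hs'uj⟩ := hs'mem
      have hujs₂ : u j ≤ s₂ := (us j).2
      have hs's₂ : s' < s₂ := lt_of_lt_of_le hs'uj hujs₂
      have hVs'fin : eVariationOn f (Icc s' s₂) ≠ ∞ :=
        fun hh => hV₂fin (top_le_iff.mp
          (hh ▸ eVariationOn.mono f (Icc_subset_Icc hts'.le le_rfl)))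
      have hadd : eVariationOn f (Icc t s') + eVariationOn f (Icc s' s₂)
          = eVariationOn f (Icc t s₂) := by
        have h2 := eVariationOn.Icc_add_Icc f (s := univ) hts'.le hs's₂.le (mem_univ s')
        simpa using h2
      have htail : edist (f (u j)) (f s')
            + ∑ i ∈ Finset.Ico j n, edist (f (u (i+1))) (f (u i))
          ≤ eVariationOn f (Icc s' s₂) := by
        set v : ℕ → ℝ := fun k => if k = 0 then s' else u (min (j + (k-1)) n) with hv
        have hv0 : v 0 = s' := rfl
        have hv1 : ∀ k, 1 ≤ k → v k = u (min (j + (k-1)) n) := by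
          intro k hk
          simp only [hv]
          rw [if_neg (by omega)]
        have hvmono : Monotone v := by
          intro k l hkl
          rcases Nat.eq_zero_or_pos k with rfl | hk
          · rcases Nat.eq_zero_or_pos l with rfl | hl
            · exact le_rfl
            · rw [hv0, hv1 l hl]
              exact le_trans hs'uj.le (hu (le_min (by omega) hjn))
          · have hl : 1 ≤ l := le_trans hk hkl
            rw [hv1 k hk, hv1 l hl]
            exact hu (min_le_min (by omega) le_rfl)
        have hvmem : ∀ k, v k ∈ Icc s' s₂ := by
          intro k
          rcases Nat.eq_zero_or_pos k with rfl | hk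
          · exact ⟨le_rfl, hs's₂.le⟩
          · rw [hv1 k hk]
            exact ⟨le_trans hs'uj.le (hu (le_min (by omega) hjn)), (us _).2⟩
        have hsum := eVariationOn.sum_le (f := f) (n := n - j + 1) hvmono hvmem
        have hcalc : ∑ k ∈ Finset.range (n - j + 1), edist (f (v (k+1))) (f (v k))
            = edist (f (u j)) (f s')
              + ∑ i ∈ Finset.Ico j n, edist (f (u (i+1))) (f (u i)) := by
          rw [Finset.sum_range_succ']
          rw [add_comm]
          congr 1
          · rw [hv1 1 le_rfl, hv0]
            have : min (j + (1 - 1)) n = j := by omega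
            rw [this]
          · rw [Finset.sum_Ico_eq_sum_range]
            refine Finset.sum_congr rfl fun k hk => ?_
            have hkn : k < n - j := Finset.mem_range.mp hk
            rw [hv1 (k+1+1) (by omega), hv1 (k+1) (by omega)]
            have e1 : min (j + (k + 1 + 1 - 1)) n = j + k + 1 := by omega
            have e2 : min (j + (k + 1 - 1)) n = j + k := by omega
            rw [e1, e2]
        rw [← hcalc]
        exact hsum
      have hsplit : S ≤ edist (f s') (f t) + eVariationOn f (Icc s' s₂) := by
        rcases Nat.eq_zero_or_pos j with hj0 | hj1
        · have hS' : S ≤ eVariationOn f (Icc s' s₂) := by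
            apply eVariationOn.sum_le (f := f) (n := n) hu
            intro i
            refine ⟨le_trans hs'uj.le ?_, (us i).2⟩
            rw [hj0]
            exact hu (Nat.zero_le i)
          exact hS'.trans (self_le_add_left _ _)
        · have hdecomp : S = (∑ i ∈ Finset.Ico 0 j, edist (f (u (i+1))) (f (u i)))
              + ∑ i ∈ Finset.Ico j n, edist (f (u (i+1))) (f (u i)) := by
            rw [hSdef, Finset.range_eq_Ico,
              ← Finset.sum_Ico_consecutive _ (Nat.zero_le j) hjn]
          have hhead : ∑ i ∈ Finset.Ico 0 j, edist (f (u (i+1))) (f (u i))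
              = edist (f (u j)) (f t) := by
            rw [← Finset.range_eq_Ico]
            have hj' : j = (j - 1) + 1 := by omega
            rw [hj', Finset.sum_range_succ]
            have hz : ∑ i ∈ Finset.range (j - 1), edist (f (u (i+1))) (f (u i)) = 0 := by
              refine Finset.sum_eq_zero fun i hi => ?_
              have hij : i < j - 1 := Finset.mem_range.mp hi
              rw [hlt i (by omega), hlt (i+1) (by omega), edist_self]
            rw [hz, zero_add, hlt (j-1) (by omega)]
          calc S = edist (f (u j)) (f t)
                + ∑ i ∈ Finset.Ico j n, edist (f (u (i+1))) (f (u i)) := by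
                rw [hdecomp, hhead]
            _ ≤ (edist (f (u j)) (f s') + edist (f s') (f t))
                + ∑ i ∈ Finset.Ico j n, edist (f (u (i+1))) (f (u i)) :=
                add_le_add_left (edist_triangle _ _ _) _
            _ = edist (f s') (f t) + (edist (f (u j)) (f s')
                + ∑ i ∈ Finset.Ico j n, edist (f (u (i+1))) (f (u i))) := by ring
            _ ≤ edist (f s') (f t) + eVariationOn f (Icc s' s₂) :=
                add_le_add_right htail _
      have hchain : L + eVariationOn f (Icc s' s₂)
          ≤ (edist (f s') (f t) + η) + eVariationOn f (Icc s' s₂) := by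
        calc L + eVariationOn f (Icc s' s₂)
            ≤ eVariationOn f (Icc t s') + eVariationOn f (Icc s' s₂) :=
              add_le_add_left (hLle ⟨s', ⟨hts', lt_trans hs's₂ hs₂s₁⟩⟩) _
          _ = eVariationOn f (Icc t s₂) := hadd
          _ ≤ S + η := hSle
          _ ≤ (edist (f s') (f t) + eVariationOn f (Icc s' s₂)) + η :=
              add_le_add_left hsplit _
          _ = (edist (f s') (f t) + η) + eVariationOn f (Icc s' s₂) := by ring
      have hLe : L ≤ edist (f s') (f t) + η :=
        (WithTop.add_le_add_iff_right hVs'fin).mp hchain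
      have hηfin : η ≠ ∞ := fun hh => hLfin (top_le_iff.mp (hh ▸ hηL.le))
      have hfin2 : L < η + η :=
        lt_of_le_of_lt hLe (ENNReal.add_lt_add_right hηfin hs'e)
      rw [hη2] at hfin2
      exact absurd (lt_trans hfin2 hhalf) (lt_irrefl _)
    · push_neg at hj
      have hS0 : S = 0 := by
        refine Finset.sum_eq_zero fun i hi => ?_
        have hin : i < n := Finset.mem_range.mp hi
        have h1 : u (i+1) = t := le_antisymm (hj (i+1) hin) (us (i+1)).1
        have h2 : u i = t := le_antisymm (hj i hin.le) (us i).1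
        rw [h1, h2, edist_self]
      have hLη : L ≤ η := hLV₂.trans (hSle.trans (by rw [hS0, zero_add]))
      exact absurd (lt_of_le_of_lt hLη hηL) (lt_irrefl _)
  have hlt : L < ε := hL0 ▸ hε
  rw [hLdef, iInf_lt_iff] at hlt
  obtain ⟨⟨s₂, hs₂⟩, hs⟩ := hlt
  exact ⟨s₂, hs₂.1, hs₂.2, hs.le⟩

lemma evar_eq_countable_sup (f : ℝ → ℝ) (D : Set ℝ) :
    eVariationOn f D
      = ⨆ (n : ℕ) (u : {u : ℕ → ℝ //
          Monotone u ∧ (∀ i, u i ∈ D) ∧ ∀ i, u (min i n) = u i}),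
        ∑ i ∈ Finset.range n, edist (f (u.1 (i+1))) (f (u.1 i)) := by
  apply le_antisymm
  · apply iSup_le
    rintro ⟨n, u, hu, us⟩
    set u' : ℕ → ℝ := fun i => u (min i n) with hu'
    have h1 : Monotone u' := fun i j hij => hu (min_le_min hij le_rfl)
    have h2 : ∀ i, u' i ∈ D := fun i => us _
    have h3 : ∀ i, u' (min i n) = u' i := fun i => by
      simp only [hu']
      rw [min_assoc, min_self]
    refine le_trans (le_of_eq ?_) (le_iSup_of_le n (le_iSup_of_le ⟨u', h1, h2, h3⟩ le_rfl))
    refine Finset.sum_congr rfl fun i hi => ?_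
    have hin : i < n := Finset.mem_range.mp hi
    simp only [hu']
    rw [min_eq_left (by omega), min_eq_left (by omega)]
  · apply iSup_le
    intro n
    apply iSup_le
    rintro ⟨u, hu, us, _⟩
    exact eVariationOn.sum_le (f := f) (n := n) hu us

lemma measurable_evar {Ω : Type*} {m' : MeasurableSpace Ω} (g : Ω → ℝ → ℝ)
    {D : Set ℝ} (hD : D.Countable)
    (hg : ∀ d ∈ D, Measurable fun ω => g ω d) :
    Measurable fun ω => eVariationOn (g ω) D := by
  have hrw : (fun ω => eVariationOn (g ω) D)
      = fun ω => ⨆ (n : ℕ) (u : {u : ℕ → ℝ //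
          Monotone u ∧ (∀ i, u i ∈ D) ∧ ∀ i, u (min i n) = u i}),
        ∑ i ∈ Finset.range n, edist (g ω (u.1 (i+1))) (g ω (u.1 i)) := by
    funext ω
    exact evar_eq_countable_sup (g ω) D
  rw [hrw]
  refine Measurable.iSup fun n => ?_
  haveI : Countable {u : ℕ → ℝ //
      Monotone u ∧ (∀ i, u i ∈ D) ∧ ∀ i, u (min i n) = u i} := by
    haveI := hD.to_subtype
    have hinj : Function.Injective
        (fun (u : {u : ℕ → ℝ // Monotone u ∧ (∀ i, u i ∈ D) ∧ ∀ i, u (min i n) = u i})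
          (i : Fin (n+1)) => (⟨u.1 i, u.2.2.1 i⟩ : D)) := by
      intro a b hab
      ext i
      have key : ∀ k, k < n + 1 → a.1 k = b.1 k := by
        intro k hk
        have := congrFun hab ⟨k, hk⟩
        exact congrArg Subtype.val this
      calc a.1 i = a.1 (min i n) := (a.2.2.2 i).symm
        _ = b.1 (min i n) := key _ (by omega)
        _ = b.1 i := b.2.2.2 i
    exact Function.Injective.countable hinj
  refine Measurable.iSup fun u => ?_
  refine Finset.measurable_sum _ fun i _ => ?_
  exact Measurable.edist (hg _ (u.2.2.1 (i+1))) (hg _ (u.2.2.1 i))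

lemma measurable_evar_Icc {Ω : Type*} {m' : MeasurableSpace Ω} (g : Ω → ℝ → ℝ)
    (hg_rc : ∀ ω t, ContinuousWithinAt (g ω) (Ici t) t) {c : ℝ} (hc : 0 ≤ c)
    (hmeas : ∀ d, 0 ≤ d → d ≤ c → Measurable fun ω => g ω d) :
    Measurable fun ω => eVariationOn (g ω) (Icc 0 c) := by
  set D : Set ℝ := (Icc 0 c ∩ range ((↑) : ℚ → ℝ)) ∪ {0, c} with hD
  have hDsub : D ⊆ Icc 0 c := by
    rintro d (⟨hd, -⟩ | hd)
    · exact hd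
    · rcases hd with rfl | rfl
      · exact ⟨le_rfl, hc⟩
      · exact ⟨hc, le_rfl⟩
  have hcD : c ∈ D := Or.inr (by simp)
  have hdense : ∀ x ∈ Ico 0 c, ∀ y, x < y → (D ∩ Ico x y).Nonempty := by
    rintro x ⟨hx0, hxc⟩ y hxy
    obtain ⟨q, hq1, hq2⟩ := exists_rat_btwn (lt_min hxy hxc)
    refine ⟨(q : ℝ), Or.inl ⟨⟨hx0.trans hq1.le, (hq2.trans_le (min_le_right _ _)).le⟩,
      mem_range_self q⟩, hq1.le, hq2.trans_le (min_le_left _ _)⟩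
  have hDc : D.Countable :=
    (((countable_range _).mono inter_subset_right).union
      (((countable_singleton c).insert 0)))
  have hrw : (fun ω => eVariationOn (g ω) (Icc 0 c)) = fun ω => eVariationOn (g ω) D :=
    funext fun ω => evar_dense (g ω) (hg_rc ω) hDsub hcD hdense
  rw [hrw]
  exact measurable_evar g hDc fun d hd => hmeas d (hDsub hd).1 (hDsub hd).2

lemma Wrc (f : ℝ → ℝ) {T : ℝ} (hrc : ∀ u, ContinuousWithinAt f (Ici u) u)
    (hfin : eVariationOn f (Icc 0 T) ≠ ∞) {t : ℝ} (ht0 : 0 ≤ t) (htT : t < T) :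
    ContinuousWithinAt (fun s => (eVariationOn f (Icc 0 (min s T))).toReal) (Ici t) t := by
  have hfin' : ∀ a b : ℝ, 0 ≤ a → b ≤ T → eVariationOn f (Icc a b) ≠ ∞ := by
    intro a b ha hb hh
    exact hfin (top_le_iff.mp (hh ▸ eVariationOn.mono f (Icc_subset_Icc ha hb)))
  refine Metric.tendsto_nhds.mpr fun ε hε => ?_
  obtain ⟨s₂, hts₂, hs₂T, hsmall⟩ := evar_small f htT (hrc t)
    (hfin' t T ht0 le_rfl) (ε := ENNReal.ofReal (ε/2)) (by positivity)
  filter_upwards [Ico_mem_nhdsGE (⟨le_rfl, hts₂⟩ : t ∈ Ico t s₂).2] with s hs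
  obtain ⟨hts, hss₂⟩ := hs
  have hminT : min t T = t := min_eq_left htT.le
  have htm : t ≤ min s T := le_min hts htT.le
  have hadd : eVariationOn f (Icc 0 t) + eVariationOn f (Icc t (min s T))
      = eVariationOn f (Icc 0 (min s T)) := by
    have h2 := eVariationOn.Icc_add_Icc f (s := univ) ht0 htm (mem_univ t)
    simpa using h2
  have hmidfin : eVariationOn f (Icc t (min s T)) ≠ ∞ :=
    hfin' t (min s T) ht0 (min_le_right _ _)
  have h0fin : eVariationOn f (Icc 0 t) ≠ ∞ := hfin' 0 t le_rfl htT.le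
  have hmid_le : eVariationOn f (Icc t (min s T)) ≤ ENNReal.ofReal (ε/2) :=
    le_trans (eVariationOn.mono f (Icc_subset_Icc le_rfl
        ((min_le_left s T).trans hss₂.le))) hsmall
  have hWdiff : (eVariationOn f (Icc 0 (min s T))).toReal
      = (eVariationOn f (Icc 0 t)).toReal + (eVariationOn f (Icc t (min s T))).toReal := by
    rw [← hadd, ENNReal.toReal_add h0fin hmidfin]
  rw [Real.dist_eq, hminT, hWdiff]
  have h1 : (eVariationOn f (Icc t (min s T))).toReal ≤ ε/2 := by
    have := ENNReal.toReal_mono ENNReal.ofReal_ne_top hmid_le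
    rwa [ENNReal.toReal_ofReal (by positivity)] at this
  have h2 : 0 ≤ (eVariationOn f (Icc t (min s T))).toReal := ENNReal.toReal_nonneg
  rw [add_sub_cancel_left, abs_of_nonneg h2]
  linarith

section Jordan

variable (P : Measure Ω) [IsProbabilityMeasure P] (ℱ : Filtration ℝ m) {T : ℝ}

lemma plan_of_sign (hT : 0 < T) {x y : Ω → ℝ → ℝ}
    (hx : IsPlan P ℱ T 1 x) (hy : IsPlan P ℱ T 1 y) (σ : ℝ) (hσ : σ = 1 ∨ σ = -1) :
    IsPlan P ℱ T 1 (fun ω t => if t < 0 then 0 else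
      (σ * ((x ω (min t T) - y ω (min t T)) - (x ω 0 - y ω 0))
        + (eVariationOn (fun u => x ω u - y ω u) (Set.Icc 0 (min t T))).toReal) / 2
      + max (σ * (x ω 0 - y ω 0)) 0) := by
  set z : Ω → ℝ → ℝ := fun ω t => x ω t - y ω t with hz
  set W : Ω → ℝ → ℝ := fun ω t => (eVariationOn (z ω) (Set.Icc 0 (min t T))).toReal with hW
  set r : Ω → ℝ → ℝ := fun ω t => if t < 0 then 0 else
      (σ * (z ω (min t T) - z ω 0) + W ω t) / 2 + max (σ * (z ω 0)) 0 with hr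
  show IsPlan P ℱ T 1 r
  clear_value r W z
  have hσabs : ∀ a : ℝ, σ * a ≤ |a| := by
    intro a
    rcases hσ with rfl | rfl
    · rw [one_mul]; exact le_abs_self a
    · rw [neg_one_mul]; exact neg_le_abs a
  have hσabs' : ∀ a : ℝ, -(σ * a) ≤ |a| := by
    intro a
    rcases hσ with rfl | rfl
    · rw [one_mul]; exact neg_le_abs a
    · rw [neg_one_mul, neg_neg]; exact le_abs_self a
  have hzrc : ∀ ω t, ContinuousWithinAt (z ω) (Set.Ici t) t := by
    intro ω t
    simp only [hz]
    exact (hx.right_cont ω t).sub (hy.right_cont ω t)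
  have hx0 : ∀ ω t, 0 ≤ t → 0 ≤ x ω t := fun ω t ht => by
    have := hx.mono ω (show (-1:ℝ) ≤ t by linarith)
    rwa [hx.zero_neg ω (-1) (by norm_num)] at this
  have hy0 : ∀ ω t, 0 ≤ t → 0 ≤ y ω t := fun ω t ht => by
    have := hy.mono ω (show (-1:ℝ) ≤ t by linarith)
    rwa [hy.zero_neg ω (-1) (by norm_num)] at this
  have hvarx : ∀ ω (a b : ℝ), eVariationOn (x ω) (Set.Icc a b)
      ≤ ENNReal.ofReal (x ω b - x ω a) := by
    intro ω a b
    have := ((hx.mono ω).monotoneOn Set.univ).eVariationOn_le (Set.mem_univ a) (Set.mem_univ b)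
    simpa using this
  have hvary : ∀ ω (a b : ℝ), eVariationOn (y ω) (Set.Icc a b)
      ≤ ENNReal.ofReal (y ω b - y ω a) := by
    intro ω a b
    have := ((hy.mono ω).monotoneOn Set.univ).eVariationOn_le (Set.mem_univ a) (Set.mem_univ b)
    simpa using this
  have hvarz : ∀ ω (a b : ℝ), eVariationOn (z ω) (Set.Icc a b)
      ≤ ENNReal.ofReal (x ω b - x ω a) + ENNReal.ofReal (y ω b - y ω a) := by
    intro ω a b
    simp only [hz]
    exact le_trans (evar_sub_le (x ω) (y ω) _) (add_le_add (hvarx ω a b) (hvary ω a b))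
  have hfinz : ∀ ω (a b : ℝ), eVariationOn (z ω) (Set.Icc a b) ≠ ∞ :=
    fun ω a b => ne_top_of_le_ne_top (by finiteness) (hvarz ω a b)
  have habs : ∀ ω (s t : ℝ), 0 ≤ s → s ≤ t →
      |z ω (min t T) - z ω (min s T)| ≤ W ω t - W ω s := by
    intro ω s t hs hst
    set a := min s T with ha
    set b := min t T with hb
    have hab : a ≤ b := min_le_min hst le_rfl
    have h0a : 0 ≤ a := le_min hs hT.le
    have hadd : eVariationOn (z ω) (Set.Icc 0 a) + eVariationOn (z ω) (Set.Icc a b)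
        = eVariationOn (z ω) (Set.Icc 0 b) := by
      have h2 := eVariationOn.Icc_add_Icc (z ω) (s := Set.univ) h0a hab (Set.mem_univ a)
      simpa using h2
    have hed : ENNReal.ofReal |z ω b - z ω a| ≤ eVariationOn (z ω) (Set.Icc a b) := by
      have h3 := eVariationOn.edist_le (z ω)
        (show b ∈ Set.Icc a b from ⟨hab, le_rfl⟩) (show a ∈ Set.Icc a b from ⟨le_rfl, hab⟩)
      rwa [edist_dist, Real.dist_eq] at h3
    have h4 : |z ω b - z ω a| ≤ (eVariationOn (z ω) (Set.Icc a b)).toReal :=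
      (ENNReal.ofReal_le_iff_le_toReal (hfinz ω a b)).mp hed
    have h5 : W ω t = W ω s + (eVariationOn (z ω) (Set.Icc a b)).toReal := by
      simp only [hW, ← hb, ← ha]
      rw [← hadd, ENNReal.toReal_add (hfinz ω 0 a) (hfinz ω a b)]
    rw [h5]
    linarith
  have hWmono : ∀ ω (s t : ℝ), 0 ≤ s → s ≤ t → W ω s ≤ W ω t := by
    intro ω s t hs hst
    have h6 := habs ω s t hs hst
    have h7 : (0:ℝ) ≤ |z ω (min t T) - z ω (min s T)| := abs_nonneg _
    linarith
  have hW0 : ∀ ω, W ω 0 = 0 := by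
    intro ω
    simp only [hW, min_eq_left hT.le]
    rw [Set.Icc_self, eVariationOn.subsingleton (z ω) (Set.subsingleton_singleton)]
    simp
  have hmono : ∀ ω, Monotone (r ω) := by
    intro ω s t hst
    rcases lt_or_ge s 0 with hs | hs
    · rcases lt_or_ge t 0 with ht | ht
      · simp only [hr, if_pos hs, if_pos ht, le_refl]
      · simp only [hr, if_pos hs, if_neg (not_lt.mpr ht)]
        have h7 := habs ω 0 t le_rfl ht
        rw [hW0 ω, min_eq_left hT.le] at h7
        have h11 := hσabs' (z ω (min t T) - z ω 0)
        have h9 : (0:ℝ) ≤ max (σ * z ω 0) 0 := le_max_right _ _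
        have h12 : 0 ≤ (σ * (z ω (min t T) - z ω 0) + W ω t) / 2 := by linarith
        linarith
    · have ht : (0:ℝ) ≤ t := le_trans hs hst
      simp only [hr, if_neg (not_lt.mpr hs), if_neg (not_lt.mpr ht)]
      have h7 := habs ω s t hs hst
      have h10 : σ * (z ω (min t T) - z ω 0) - σ * (z ω (min s T) - z ω 0)
          = σ * (z ω (min t T) - z ω (min s T)) := by ring
      have h11 := hσabs' (z ω (min t T) - z ω (min s T))
      have h13 : (σ * (z ω (min s T) - z ω 0) + W ω s) / 2
          ≤ (σ * (z ω (min t T) - z ω 0) + W ω t) / 2 := by linarith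
      linarith
  have hfinz0T : ∀ ω, eVariationOn (z ω) (Set.Icc 0 T) ≠ ∞ := fun ω => hfinz ω 0 T
  have hrc' : ∀ ω t, ContinuousWithinAt (r ω) (Set.Ici t) t := by
    intro ω t
    rcases lt_or_ge t 0 with ht | ht
    · refine ContinuousWithinAt.congr_of_eventuallyEq
        (f := fun _ => (0:ℝ)) continuousWithinAt_const ?_ (by simp only [hr, if_pos ht])
      filter_upwards [Ico_mem_nhdsGE (⟨le_rfl, ht⟩ : t ∈ Set.Ico t 0).2] with s hs
      simp only [hr, if_pos hs.2]
    · rcases lt_or_ge t T with htT | hTt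
      · have hA : ContinuousWithinAt (fun s => z ω (min s T)) (Set.Ici t) t := by
          have hmin : ContinuousWithinAt (fun s : ℝ => min s T) (Set.Ici t) t :=
            (continuous_id.min continuous_const).continuousWithinAt
          have hmaps : Set.MapsTo (fun s : ℝ => min s T) (Set.Ici t) (Set.Ici t) :=
            fun s hs => le_min hs htT.le
          have hz' : ContinuousWithinAt (z ω) (Set.Ici t) (min t T) := by
            rw [min_eq_left htT.le]; exact hzrc ω t
          exact ContinuousWithinAt.comp (g := z ω) (f := fun s : ℝ => min s T) hz' hmin hmaps
        have hB : ContinuousWithinAt (W ω) (Set.Ici t) t := by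
          have := Wrc (z ω) (hzrc ω) (hfinz0T ω) ht htT
          refine this.congr (fun s _ => ?_) ?_ <;> simp only [hW]
        have hF : ContinuousWithinAt (fun s =>
            (σ * (z ω (min s T) - z ω 0) + W ω s) / 2 + max (σ * (z ω 0)) 0)
            (Set.Ici t) t :=
          (((continuousWithinAt_const.mul (hA.sub continuousWithinAt_const)).add hB).div_const
            2).add continuousWithinAt_const
        refine hF.congr (fun s hs => ?_) ?_
        · simp only [hr, if_neg (not_lt.mpr (le_trans ht hs))]
        · simp only [hr, if_neg (not_lt.mpr ht)]
      · refine (continuousWithinAt_const (b := r ω t)).congr (fun s hs => ?_) rfl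
        have hs0 : ¬ s < 0 := not_lt.mpr (le_trans (le_trans hT.le hTt) hs)
        have ht0 : ¬ t < 0 := not_lt.mpr ht
        simp only [hr, hW, if_neg hs0, if_neg ht0, min_eq_right (hTt.trans hs),
          min_eq_right hTt]
  have hadapt : ∀ t, Measurable[ℱ t] fun ω => r ω t := by
    intro t
    rcases lt_or_ge t 0 with ht | ht
    · have heq : (fun ω => r ω t) = fun _ => (0:ℝ) := by
        funext ω; simp only [hr, if_pos ht]
      rw [heq]; exact measurable_const
    · have hzmeas : ∀ d : ℝ, d ≤ t → Measurable[ℱ t] fun ω => z ω d := by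
        intro d hd
        have heq : (fun ω => z ω d) = fun ω => x ω d - y ω d := by
          funext ω; simp only [hz]
        rw [heq]
        exact ((hx.adapted d).mono (ℱ.mono hd) le_rfl).sub
          ((hy.adapted d).mono (ℱ.mono hd) le_rfl)
      have hVt : Measurable[ℱ t] fun ω => eVariationOn (z ω) (Set.Icc 0 (min t T)) :=
        measurable_evar_Icc (m' := ℱ t) z hzrc (le_min ht hT.le)
          (fun d hd0 hdc => hzmeas d (hdc.trans (min_le_left t T)))
      have heq : (fun ω => r ω t) = fun ω =>
          (σ * (z ω (min t T) - z ω 0)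
            + (eVariationOn (z ω) (Set.Icc 0 (min t T))).toReal) / 2
          + max (σ * (z ω 0)) 0 := by
        funext ω; simp only [hr, hW, if_neg (not_lt.mpr ht)]
      rw [heq]
      refine Measurable.add ?_ ?_
      · refine Measurable.div_const ?_ 2
        refine Measurable.add ?_ (ENNReal.measurable_toReal.comp hVt)
        exact ((hzmeas (min t T) (min_le_left _ _)).sub (hzmeas 0 ht)).const_mul σ
      · exact ((hzmeas 0 ht).const_mul σ).max measurable_const
  have hr_nonneg : ∀ ω t, 0 ≤ t → 0 ≤ r ω t := by
    intro ω t ht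
    have h1 := hmono ω (neg_neg_iff_pos.mpr one_pos |>.le.trans ht : (-1:ℝ) ≤ t)
    have h2 : r ω (-1) = 0 := by simp only [hr, if_pos (by norm_num : (-1:ℝ) < 0)]
    linarith
  have hrT_le : ∀ ω, r ω T ≤ x ω T + y ω T := by
    intro ω
    have hzero : ¬ T < 0 := not_lt.mpr hT.le
    have h7 := habs ω 0 T le_rfl hT.le
    rw [hW0 ω, min_eq_left hT.le, min_self] at h7
    have h8 := hσabs (z ω T - z ω 0)
    have h9 : max (σ * (z ω 0)) 0 ≤ |z ω 0| :=
      max_le (hσabs (z ω 0)) (abs_nonneg _)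
    have hWT : W ω T ≤ (x ω T - x ω 0) + (y ω T - y ω 0) := by
      have hb1 : eVariationOn (z ω) (Set.Icc 0 (min T T))
          ≤ ENNReal.ofReal ((x ω T - x ω 0) + (y ω T - y ω 0)) := by
        rw [min_self, ENNReal.ofReal_add (sub_nonneg.mpr (hx.mono ω hT.le))
          (sub_nonneg.mpr (hy.mono ω hT.le))]
        exact hvarz ω 0 T
      have := ENNReal.toReal_le_of_le_ofReal
        (by nlinarith [hx.mono ω hT.le, hy.mono ω hT.le, hx0 ω 0 le_rfl, hy0 ω 0 le_rfl])
        hb1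
      simpa only [hW] using this
    have habs0 : |z ω 0| ≤ x ω 0 + y ω 0 := by
      have h10 : z ω 0 = x ω 0 - y ω 0 := by simp only [hz]
      rw [h10]
      calc |x ω 0 - y ω 0| ≤ |x ω 0| + |y ω 0| := abs_sub _ _
        _ = x ω 0 + y ω 0 := by
            rw [abs_of_nonneg (hx0 ω 0 le_rfl), abs_of_nonneg (hy0 ω 0 le_rfl)]
    have hexpand : r ω T = (σ * (z ω T - z ω 0) + W ω T) / 2 + max (σ * (z ω 0)) 0 := by
      simp only [hr, if_neg hzero, min_self]
    rw [hexpand]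
    have hzT : |z ω T - z ω 0| ≤ W ω T := by linarith
    have : σ * (z ω T - z ω 0) ≤ W ω T := le_trans h8 hzT
    have hfirst : (σ * (z ω T - z ω 0) + W ω T) / 2 ≤ W ω T := by linarith
    linarith
  refine ⟨hmono, hrc', ?_, ?_, hadapt, ?_⟩
  · intro ω t ht
    simp only [hr, if_pos ht]
  · intro ω t hTt
    have h0t : ¬ t < 0 := not_lt.mpr (le_trans hT.le hTt)
    have h0T : ¬ T < 0 := not_lt.mpr hT.le
    simp only [hr, hW, if_neg h0t, if_neg h0T, min_eq_right hTt, min_self]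
  · -- Memℒp
    have hmT : Measurable fun ω => r ω T := (hadapt T).mono (ℱ.le T) le_rfl
    have hintxy : Integrable (fun ω => x ω T + y ω T) P :=
      (memLp_one_iff_integrable.mp hx.memLp).add (memLp_one_iff_integrable.mp hy.memLp)
    refine memLp_one_iff_integrable.mpr ?_
    refine Integrable.mono hintxy hmT.aestronglyMeasurable ?_
    refine Filter.Eventually.of_forall fun ω => ?_
    rw [Real.norm_eq_abs, Real.norm_eq_abs, abs_of_nonneg (hr_nonneg ω T hT.le)]
    exact (hrT_le ω).trans (le_abs_self _)


lemma jordan (hT : 0 < T) {x y : Ω → ℝ → ℝ}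
    (hx : IsPlan P ℱ T 1 x) (hy : IsPlan P ℱ T 1 y) :
    ∃ p q : Ω → ℝ → ℝ, IsPlan P ℱ T 1 p ∧ IsPlan P ℱ T 1 q ∧ x - y = p - q ∧
      ∀ ω, p ω T + q ω T = pathTV T ((x - y) ω) := by
  refine ⟨_, _, plan_of_sign P ℱ hT hx hy 1 (Or.inl rfl),
    plan_of_sign P ℱ hT hx hy (-1) (Or.inr rfl), ?_, ?_⟩
  · funext ω t
    simp only [Pi.sub_apply]
    rcases lt_or_ge t 0 with ht | ht
    · rw [if_pos ht, if_pos ht, hx.zero_neg ω t ht, hy.zero_neg ω t ht]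
    · rw [if_neg (not_lt.mpr ht), if_neg (not_lt.mpr ht)]
      have hxy_t : x ω (min t T) - y ω (min t T) = x ω t - y ω t := by
        rcases le_total t T with h | h
        · rw [min_eq_left h]
        · rw [min_eq_right h, hx.const_ge ω t h, hy.const_ge ω t h]
      have hmax : max (1 * (x ω 0 - y ω 0)) 0 - max (-1 * (x ω 0 - y ω 0)) 0
          = x ω 0 - y ω 0 := by
        rw [one_mul, neg_one_mul]
        rcases le_total 0 (x ω 0 - y ω 0) with h | h
        · rw [max_eq_left h, max_eq_right (neg_nonpos.mpr h)]; ring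
        · rw [max_eq_right h, max_eq_left (neg_nonneg.mpr h)]; ring
      linarith [hmax, hxy_t]
  · intro ω
    have h0T : ¬ T < 0 := not_lt.mpr hT.le
    rw [if_neg h0T, if_neg h0T]
    have hTVeq : pathTV T ((x - y) ω) = |x ω 0 - y ω 0|
        + (eVariationOn (fun u => x ω u - y ω u) (Set.Icc 0 T)).toReal := rfl
    simp only [one_mul, neg_one_mul, min_self]
    rw [hTVeq, abs_eq_pospart_add_negpart (x ω 0 - y ω 0)]
    linarith []

lemma smul_plan {a : ℝ} (ha : 0 ≤ a) {x : Ω → ℝ → ℝ} (hx : IsPlan P ℱ T 1 x) :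
    IsPlan P ℱ T 1 (a • x) := by
  have happ : ∀ ω t, (a • x) ω t = a * x ω t := fun ω t => rfl
  constructor
  · intro ω s t hst
    simp only [happ]
    exact mul_le_mul_of_nonneg_left (hx.mono ω hst) ha
  · intro ω t
    have : ContinuousWithinAt (fun s => a * x ω s) (Set.Ici t) t :=
      continuousWithinAt_const.mul (hx.right_cont ω t)
    exact this.congr (fun s _ => happ ω s) (happ ω t)
  · intro ω t ht
    rw [happ, hx.zero_neg ω t ht, mul_zero]
  · intro ω t hTt
    rw [happ, happ, hx.const_ge ω t hTt]
  · intro t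
    have heq : (fun ω => (a • x) ω t) = fun ω => a * x ω t := funext fun ω => happ ω t
    rw [heq]
    exact (hx.adapted t).const_mul a
  · have heq : (fun ω => (a • x) ω T) = fun ω => a * x ω T := funext fun ω => happ ω T
    rw [heq]
    exact hx.memLp.const_mul a

lemma zero_plan : IsPlan P ℱ T 1 (0 : Ω → ℝ → ℝ) := by
  constructor
  · intro ω s t _; exact le_rfl
  · intro ω t; exact continuousWithinAt_const
  · intro ω t _; rfl
  · intro ω t _; rfl
  · intro t; exact measurable_const
  · exact memLp_const 0

lemma plan_T_nonneg {x : Ω → ℝ → ℝ} (hx : IsPlan P ℱ T 1 x) (hT : 0 < T) (ω : Ω) :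
    0 ≤ x ω T := by
  have := hx.mono ω (show (-1:ℝ) ≤ T by linarith)
  rwa [hx.zero_neg ω (-1) (by norm_num)] at this

lemma inorm_eq (hT : 0 < T) (z : Ω → ℝ → ℝ) :
    inorm P T 1 z = ∫ ω, ((∫ t in Set.Icc (0:ℝ) T, |z ω t|) + |z ω T|) ∂P := by
  simp only [inorm, ENNReal.toReal_one, Real.rpow_one, div_one]

lemma inorm_nonneg (hT : 0 < T) (z : Ω → ℝ → ℝ) : 0 ≤ inorm P T 1 z := by
  rw [inorm_eq P hT z]
  refine integral_nonneg fun ω => ?_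
  have h1 : 0 ≤ ∫ t in Set.Icc (0:ℝ) T, |z ω t| :=
    integral_nonneg fun t => abs_nonneg _
  positivity

lemma inorm_plan_le (hT : 0 < T) {x : Ω → ℝ → ℝ} (hx : IsPlan P ℱ T 1 x) :
    inorm P T 1 x ≤ (T + 1) * ∫ ω, x ω T ∂P := by
  rw [inorm_eq P hT x]
  have hint : Integrable (fun ω => x ω T) P := memLp_one_iff_integrable.mp hx.memLp
  have hgle : ∀ ω, (∫ t in Set.Icc (0:ℝ) T, |x ω t|) + |x ω T| ≤ (T + 1) * x ω T := by
    intro ω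
    have hxT : 0 ≤ x ω T := plan_T_nonneg P ℱ hx hT ω
    have hIntOn : IntegrableOn (fun t => |x ω t|) (Set.Icc 0 T) :=
      (((hx.mono ω).monotoneOn _).integrableOn_isCompact isCompact_Icc).abs
    have hconst : IntegrableOn (fun _ : ℝ => x ω T) (Set.Icc 0 T) :=
      (integrableOn_const_iff).mpr (Or.inr (by rw [Real.volume_Icc]; exact ENNReal.ofReal_lt_top))
    have hmono : ∀ t ∈ Set.Icc (0:ℝ) T, |x ω t| ≤ x ω T := by
      intro t ht
      have h0 : 0 ≤ x ω t := by
        have := hx.mono ω (show (-1:ℝ) ≤ t by linarith [ht.1])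
        rwa [hx.zero_neg ω (-1) (by norm_num)] at this
      rw [abs_of_nonneg h0]
      exact hx.mono ω ht.2
    have h1 : (∫ t in Set.Icc (0:ℝ) T, |x ω t|) ≤ ∫ _ in Set.Icc (0:ℝ) T, x ω T :=
      setIntegral_mono_on hIntOn hconst measurableSet_Icc hmono
    have h2 : (∫ _ in Set.Icc (0:ℝ) T, x ω T) = T * x ω T := by
      rw [setIntegral_const, Measure.real, Real.volume_Icc, smul_eq_mul]
      congr 1
      rw [ENNReal.toReal_ofReal (by linarith)]
      ring
    rw [abs_of_nonneg hxT]
    nlinarith [h1, h2]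
  calc (∫ ω, ((∫ t in Set.Icc (0:ℝ) T, |x ω t|) + |x ω T|) ∂P)
      ≤ ∫ ω, (T + 1) * x ω T ∂P := by
        refine integral_mono_of_nonneg (Filter.Eventually.of_forall fun ω => ?_)
          (hint.const_mul (T+1)) (Filter.Eventually.of_forall hgle)
        have h1 : 0 ≤ ∫ t in Set.Icc (0:ℝ) T, |x ω t| :=
          integral_nonneg fun t => abs_nonneg _
        positivity
    _ = (T + 1) * ∫ ω, x ω T ∂P := integral_const_mul _ _

lemma key_bound (hT : 0 < T) (π : (Ω → ℝ → ℝ) →ₗ[ℝ] ℝ)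
    (hcomp : Compatible P ℱ T 1 π) :
    ∃ K : ℝ, 0 ≤ K ∧ ∀ x, IsPlan P ℱ T 1 x → π x ≤ K * ∫ ω, x ω T ∂P := by
  by_contra hcon
  push_neg at hcon
  have hsel : ∀ n : ℕ, ∃ x, IsPlan P ℱ T 1 x ∧ ((n:ℝ)+1)^2 * ∫ ω, x ω T ∂P < π x := by
    intro n
    obtain ⟨x, hx1, hx2⟩ := hcon (((n:ℝ)+1)^2) (by positivity)
    exact ⟨x, hx1, hx2⟩
  choose xs hplan hbig using hsel
  have hint : ∀ n, Integrable (fun ω => xs n ω T) P :=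
    fun n => memLp_one_iff_integrable.mp (hplan n).memLp
  have hipos : ∀ n, 0 ≤ ∫ ω, xs n ω T ∂P :=
    fun n => integral_nonneg fun ω => plan_T_nonneg P ℱ (hplan n) hT ω
  have hπpos : ∀ n, 0 < π (xs n) := by
    intro n
    refine lt_of_le_of_lt ?_ (hbig n)
    exact mul_nonneg (by positivity) (hipos n)
  set ys : ℕ → Ω → ℝ → ℝ := fun n => (((n:ℝ)+1) / π (xs n)) • xs n with hys
  have hys_plan : ∀ n, IsPlan P ℱ T 1 (ys n) :=
    fun n => smul_plan P ℱ (le_of_lt (div_pos (by positivity) (hπpos n))) (hplan n)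
  have hπys : ∀ n, π (ys n) = (n:ℝ)+1 := by
    intro n
    rw [hys]
    simp only [_root_.map_smul, smul_eq_mul]
    exact div_mul_cancel₀ _ (ne_of_gt (hπpos n))
  have hysTint : ∀ n, (∫ ω, ys n ω T ∂P)
      = (((n:ℝ)+1) / π (xs n)) * ∫ ω, xs n ω T ∂P := by
    intro n
    have heq : (fun ω => ys n ω T) = fun ω => (((n:ℝ)+1) / π (xs n)) * xs n ω T := rfl
    rw [heq, integral_const_mul]
  have hbound : ∀ n, inorm P T 1 (ys n) ≤ (T+1) * (((n:ℝ)+1) / π (xs n)) * ∫ ω, xs n ω T ∂P := by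
    intro n
    have := inorm_plan_le P ℱ hT (hys_plan n)
    rw [hysTint n] at this
    linarith [this]
  have hbound2 : ∀ n, inorm P T 1 (ys n) ≤ (T+1) / ((n:ℝ)+1) := by
    intro n
    refine (hbound n).trans ?_
    have h1 : (∫ ω, xs n ω T ∂P) ≤ π (xs n) / ((n:ℝ)+1)^2 := by
      rw [le_div_iff₀ (by positivity)]
      linarith [hbig n]
    have h2 : 0 < π (xs n) := hπpos n
    have h3 : (0:ℝ) < ((n:ℝ)+1) := by positivity
    calc (T+1) * (((n:ℝ)+1) / π (xs n)) * ∫ ω, xs n ω T ∂P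
        ≤ (T+1) * (((n:ℝ)+1) / π (xs n)) * (π (xs n) / ((n:ℝ)+1)^2) := by
          refine mul_le_mul_of_nonneg_left h1 ?_
          positivity
      _ = (T+1) / ((n:ℝ)+1) := by field_simp
  have htend : Tendsto (fun n : ℕ => inorm P T 1 (ys n - 0)) atTop (nhds 0) := by
    simp only [sub_zero]
    refine squeeze_zero (fun n => inorm_nonneg P hT _) hbound2 ?_
    exact Tendsto.div_atTop tendsto_const_nhds
      (tendsto_atTop_add_const_right _ 1 tendsto_natCast_atTop_atTop)
  have hfinal := hcomp 0 (zero_plan P ℱ) ys hys_plan htend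
  rw [map_zero] at hfinal
  have heq : (fun n => π (ys n)) = fun n : ℕ => (n:ℝ)+1 := funext hπys
  rw [heq] at hfinal
  exact not_tendsto_atTop_of_tendsto_nhds hfinal
    (tendsto_atTop_add_const_right _ 1 tendsto_natCast_atTop_atTop)


/-- for `p = 1`, every compatible price is continuous on all of `E` for the
strong norm: there is `K ≥ 0` with `|π z| ≤ K ⬝ E‖z‖_TV` for every `z ∈ E`. -/
theorem compatible_price_strong_continuous
    {Ω : Type*} [m : MeasurableSpace Ω] (P : Measure Ω) [IsProbabilityMeasure P]
    (ℱ : Filtration ℝ m) (T : ℝ) (hT : 0 < T)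
    (π : (Ω → ℝ → ℝ) →ₗ[ℝ] ℝ)
    (hπ : ∀ x, IsPlan P ℱ T 1 x → 0 ≤ π x)
    (hcomp : Compatible P ℱ T 1 π) :
    ∃ K : ℝ, 0 ≤ K ∧ ∀ z, MemE P ℱ T 1 z → |π z| ≤ K * strongNorm P T z := by
  obtain ⟨K, hK0, hK⟩ := key_bound P ℱ hT π hcomp
  refine ⟨K, hK0, ?_⟩
  rintro z ⟨x, y, hx, hy, rfl⟩
  obtain ⟨p, q, hp, hq, hzpq, hTV⟩ := jordan P ℱ hT hx hy
  have hπz : π (x - y) = π p - π q := by rw [hzpq, map_sub]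
  have hintp : Integrable (fun ω => p ω T) P := memLp_one_iff_integrable.mp hp.memLp
  have hintq : Integrable (fun ω => q ω T) P := memLp_one_iff_integrable.mp hq.memLp
  have hsn : strongNorm P T (x - y) = (∫ ω, p ω T ∂P) + ∫ ω, q ω T ∂P := by
    rw [strongNorm, ← integral_add hintp hintq]
    refine integral_congr_ae (Filter.Eventually.of_forall fun ω => ?_)
    exact (hTV ω).symm
  rw [hπz, hsn]
  have h1 : |π p - π q| ≤ π p + π q := by
    calc |π p - π q| ≤ |π p| + |π q| := abs_sub _ _
      _ = π p + π q := by rw [abs_of_nonneg (hπ p hp), abs_of_nonneg (hπ q hq)]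
  calc |π p - π q| ≤ π p + π q := h1
    _ ≤ K * (∫ ω, p ω T ∂P) + K * ∫ ω, q ω T ∂P := add_le_add (hK p hp) (hK q hq)
    _ = K * ((∫ ω, p ω T ∂P) + ∫ ω, q ω T ∂P) := by ring


end Jordan

end AuxProofs

end Equil
end
end

section
/- Let p = 1 and let π be a nonnegative linear functional on E satisfying |π(z)| ≤ K · ‖z‖_s for all z ∈ E, for some constant K ≥ 0. Then for every stopping time τ ≤ T there exists an 𝓕_τ-measurable random variable z^τ with 0 ≤ z^τ ≤ K almost surely such that π(δ_τ Z) = E[Z · z^τ] for every Z ∈ L^1(𝓕_τ, P). -/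
open MeasureTheory Set Filter
open scoped ENNReal Topology Classical

noncomputable section

namespace Equil

variable {Ω : Type*} [m : MeasurableSpace Ω]

section Aux
variable {T : ℝ} {τ : Ω → ℝ}

lemma eVariationOn_neg' (f : ℝ → ℝ) (s : Set ℝ) :
    eVariationOn (fun x => -f x) s = eVariationOn f s := by
  simp only [eVariationOn, edist_neg_neg]

lemma pathTV_step_le {T : ℝ} (s c : ℝ) (hs0 : 0 ≤ s) (hsT : s ≤ T) :
    pathTV T (fun t => if s ≤ t then c else 0) ≤ |c| := by
  set f : ℝ → ℝ := fun t => if s ≤ t then c else 0 with hf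
  have h0T : (0:ℝ) ≤ T := hs0.trans hsT
  unfold pathTV
  by_cases hs : s ≤ 0
  · have hfc : ∀ t ∈ Icc (0:ℝ) T, f t = c := fun t ht => if_pos (hs.trans ht.1)
    have hvar : eVariationOn f (Icc 0 T) = 0 := by
      apply eVariationOn.constant_on
      rintro x ⟨t, ht, rfl⟩ y ⟨t', ht', rfl⟩
      rw [hfc t ht, hfc t' ht']
    rw [hvar]
    simp [hf, if_pos hs]
  · push_neg at hs
    have hf0 : f 0 = 0 := if_neg (not_le.mpr hs)
    have hmono : ∀ c' : ℝ, 0 ≤ c' →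
        eVariationOn (fun t => if s ≤ t then c' else 0) (Icc (0:ℝ) T) ≤ ENNReal.ofReal c' := by
      intro c' hc'
      have hm : MonotoneOn (fun t => if s ≤ t then c' else 0) (Icc (0:ℝ) T) := by
        intro x _ y _ hxy
        dsimp only
        split_ifs with h1 h2 h2
        · exact le_refl c'
        · exact absurd (h1.trans hxy) h2
        · exact hc'
        · exact le_refl 0
      have := hm.eVariationOn_le (a := 0) (b := T) ⟨le_refl 0, h0T⟩ ⟨h0T, le_refl T⟩
      rw [Set.inter_self] at this
      refine this.trans (le_of_eq ?_)
      rw [if_pos hsT, if_neg (not_le.mpr hs), sub_zero]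
    have key : eVariationOn f (Icc 0 T) ≤ ENNReal.ofReal |c| := by
      rcases le_or_gt 0 c with hc | hc
      · rw [abs_of_nonneg hc]; exact hmono c hc
      · have hfe : f = fun t => -(if s ≤ t then |c| else 0) := by
          funext t; rw [hf]
          by_cases h : s ≤ t <;> simp [h, abs_of_neg hc]
        calc eVariationOn f (Icc 0 T)
            = eVariationOn (fun t => if s ≤ t then |c| else 0) (Icc (0:ℝ) T) := by
              rw [hfe, eVariationOn_neg']
          _ ≤ ENNReal.ofReal |c| := hmono _ (abs_nonneg c)
    rw [hf0, abs_zero, zero_add]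
    exact ENNReal.toReal_le_of_le_ofReal (abs_nonneg c) key

lemma deltaPlan_add (τ Z W : Ω → ℝ) :
    deltaPlan τ (Z + W) = deltaPlan τ Z + deltaPlan τ W := by
  funext ω t
  simp only [deltaPlan, Pi.add_apply]
  split_ifs <;> simp

lemma deltaPlan_sub (τ Z W : Ω → ℝ) :
    deltaPlan τ (Z - W) = deltaPlan τ Z - deltaPlan τ W := by
  funext ω t
  simp only [deltaPlan, Pi.sub_apply]
  split_ifs <;> simp

lemma deltaPlan_smul (τ : Ω → ℝ) (c : ℝ) (Z : Ω → ℝ) :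
    deltaPlan τ (c • Z) = c • deltaPlan τ Z := by
  funext ω t
  simp only [deltaPlan, Pi.smul_apply, smul_eq_mul]
  split_ifs <;> simp

lemma deltaPlan_zero (τ : Ω → ℝ) : deltaPlan τ (0 : Ω → ℝ) = 0 := by
  funext ω t
  simp only [deltaPlan, Pi.zero_apply]
  split_ifs <;> simp

lemma isPlan_deltaPlan (P : Measure Ω) (ℱ : Filtration ℝ m)
    (hτ : IsBddStoppingTime ℱ T τ) {Z : Ω → ℝ}
    (hZm : Measurable[hτ.1.measurableSpace] Z) (hZ0 : ∀ ω, 0 ≤ Z ω)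
    (hZi : Integrable Z P) :
    IsPlan P ℱ T 1 (deltaPlan τ Z) := by
  constructor
  · intro ω a b hab
    simp only [deltaPlan]
    split_ifs with h1 h2 h2
    · exact le_refl _
    · exact absurd (h1.trans hab) h2
    · exact hZ0 ω
    · exact le_refl _
  · intro ω t
    by_cases h : τ ω ≤ t
    · refine (continuousWithinAt_const (b := Z ω)).congr (fun y hy => ?_) ?_
      · exact if_pos (h.trans hy)
      · exact if_pos h
    · push_neg at h
      refine (continuousWithinAt_const (b := (0:ℝ))).congr_of_eventuallyEq ?_ ?_
      · filter_upwards [nhdsWithin_le_nhds (Iio_mem_nhds h)] with y hy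
        exact if_neg (not_le.mpr hy)
      · exact if_neg (not_le.mpr h)
  · intro ω t ht
    exact if_neg (not_le.mpr (lt_of_lt_of_le ht (hτ.2 ω).1))
  · intro ω t ht
    simp only [deltaPlan]
    rw [if_pos ((hτ.2 ω).2.trans ht), if_pos (hτ.2 ω).2]
  · intro t B hB
    have hS : MeasurableSet[ℱ t] {ω | τ ω ≤ t} := by
        have h := hτ.1 t; simp only [WithTop.coe_le_coe] at h; exact h
    have hZB : MeasurableSet[ℱ t] (Z ⁻¹' B ∩ {ω | τ ω ≤ t}) :=
      by
        have h := ((hτ.1.measurableSet _).1 (hZm hB)).2 t; simp only [WithTop.coe_le_coe] at h; exact h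
    by_cases h0 : (0:ℝ) ∈ B
    · have : (fun ω => deltaPlan τ Z ω t) ⁻¹' B =
          (Z ⁻¹' B ∩ {ω | τ ω ≤ t}) ∪ {ω | τ ω ≤ t}ᶜ := by
        ext ω
        by_cases h : τ ω ≤ t <;> simp [deltaPlan, h, h0]
      rw [this]
      exact hZB.union hS.compl
    · have : (fun ω => deltaPlan τ Z ω t) ⁻¹' B = Z ⁻¹' B ∩ {ω | τ ω ≤ t} := by
        ext ω
        by_cases h : τ ω ≤ t <;> simp [deltaPlan, h, h0]
      rw [this]
      exact hZB
  · have : (fun ω => deltaPlan τ Z ω T) = Z := funext fun ω => if_pos (hτ.2 ω).2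
    rw [this]
    exact memLp_one_iff_integrable.mpr hZi

lemma memE_deltaPlan (P : Measure Ω) (ℱ : Filtration ℝ m)
    (hτ : IsBddStoppingTime ℱ T τ) {Z : Ω → ℝ}
    (hZm : Measurable[hτ.1.measurableSpace] Z) (hZi : Integrable Z P) :
    MemE P ℱ T 1 (deltaPlan τ Z) := by
  refine ⟨deltaPlan τ (fun ω => max (Z ω) 0), deltaPlan τ (fun ω => max (-Z ω) 0),
    isPlan_deltaPlan P ℱ hτ (hZm.max measurable_const) (fun ω => le_max_right _ _)
      hZi.pos_part,
    isPlan_deltaPlan P ℱ hτ (hZm.neg.max measurable_const) (fun ω => le_max_right _ _)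
      hZi.neg.pos_part, ?_⟩
  have : Z = (fun ω => max (Z ω) 0) - fun ω => max (-Z ω) 0 := by
    funext ω
    exact (max_zero_sub_max_neg_zero_eq_self (Z ω)).symm
  calc deltaPlan τ Z = deltaPlan τ ((fun ω => max (Z ω) 0) - fun ω => max (-Z ω) 0) := by
        rw [← this]
    _ = _ := deltaPlan_sub τ _ _

lemma abs_pi_deltaPlan_le (P : Measure Ω) (ℱ : Filtration ℝ m)
    (π : (Ω → ℝ → ℝ) →ₗ[ℝ] ℝ) {K : ℝ} (hK : 0 ≤ K)
    (hbd : ∀ z, MemE P ℱ T 1 z → |π z| ≤ K * strongNorm P T z)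
    (hτ : IsBddStoppingTime ℱ T τ) {Z : Ω → ℝ}
    (hZm : Measurable[hτ.1.measurableSpace] Z) (hZi : Integrable Z P) :
    |π (deltaPlan τ Z)| ≤ K * ∫ ω, |Z ω| ∂P := by
  refine (hbd _ (memE_deltaPlan P ℱ hτ hZm hZi)).trans ?_
  refine mul_le_mul_of_nonneg_left ?_ hK
  refine integral_mono_of_nonneg (Eventually.of_forall fun ω => ?_) hZi.abs
    (Eventually.of_forall fun ω => ?_)
  · exact add_nonneg (abs_nonneg _) ENNReal.toReal_nonneg
  · exact pathTV_step_le (τ ω) (Z ω) (hτ.2 ω).1 (hτ.2 ω).2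



section Helpers
variable {α : Type*}

lemma sf_measurable {m' : MeasurableSpace α} (f : @SimpleFunc α m' ℝ) :
    Measurable[m'] ⇑f := f.measurable

lemma sf_norm_le {m' : MeasurableSpace α} (f : @SimpleFunc α m' ℝ) :
    ∃ C, ∀ x, ‖f x‖ ≤ C := f.exists_forall_norm_le

lemma sf_approx {m' : MeasurableSpace α} (P' : Measure α) {Z : α → ℝ}
    (hZm : Measurable[m'] Z) (hZi : Integrable Z P') :
    ∃ Zn : ℕ → @SimpleFunc α m' ℝ,
      Tendsto (fun n => ∫⁻ ω, (‖Zn n ω - Z ω‖₊ : ℝ≥0∞) ∂P') atTop (𝓝 0) :=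
  ⟨fun n => SimpleFunc.approxOn Z hZm (Set.range Z ∪ {0}) 0 (by simp) n,
    SimpleFunc.tendsto_approxOn_range_L1_enorm hZm hZi⟩

lemma ind_integrable {mm : MeasurableSpace α} (P : Measure α) [IsFiniteMeasure P]
    {A : Set α} (hA : MeasurableSet A) :
    Integrable (A.indicator fun _ => (1:ℝ)) P :=
  (integrable_const 1).indicator hA

lemma ind_abs_integral {mm : MeasurableSpace α} (P : Measure α) [IsFiniteMeasure P]
    {A : Set α} (hA : MeasurableSet A) :
    ∫ ω, |A.indicator (fun _ => (1:ℝ)) ω| ∂P = (P A).toReal := by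
  have h1 : (fun ω => |A.indicator (fun _ => (1:ℝ)) ω|) =
      A.indicator fun _ => (1:ℝ) := by
    funext ω; by_cases h : ω ∈ A <;> simp [h]
  rw [h1, integral_indicator_const (1:ℝ) hA, smul_eq_mul, mul_one]; rfl

lemma ind_mul_integral {mm : MeasurableSpace α} (P : Measure α)
    {s : Set α} (hs : MeasurableSet s) (c : ℝ) (z : α → ℝ) :
    ∫ ω, (c • s.indicator fun _ => (1:ℝ)) ω * z ω ∂P = c * ∫ ω in s, z ω ∂P := by
  have h3 : (fun ω => (c • Set.indicator s fun _ => (1:ℝ)) ω * z ω)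
      = s.indicator fun ω => c * z ω := by
    funext ω; by_cases h : ω ∈ s <;> simp [h]
  rw [h3, integral_indicator hs, integral_const_mul]

lemma abs_integral_le_integral_abs_aux {mm : MeasurableSpace α} {P : Measure α}
    {f : α → ℝ} : |∫ ω, f ω ∂P| ≤ ∫ ω, |f ω| ∂P := by
  simpa [Real.norm_eq_abs] using norm_integral_le_integral_norm (μ := P) f

end Helpers

/-- Core representation lemma: a finitely additive, nonnegative, `L¹`-bounded
functional on integrable `m'`-measurable functions is represented by a density. -/
lemma exists_density_repr (P : Measure Ω) [IsProbabilityMeasure P]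
    (m' : MeasurableSpace Ω) (hle : m' ≤ m) (ψ : (Ω → ℝ) → ℝ) {K : ℝ} (hK : 0 ≤ K)
    (hadd : ∀ Z W : Ω → ℝ, ψ (Z + W) = ψ Z + ψ W)
    (hsmul : ∀ (c : ℝ) (Z : Ω → ℝ), ψ (c • Z) = c * ψ Z)
    (hbound : ∀ Z : Ω → ℝ, Measurable[m'] Z → Integrable Z P →
      |ψ Z| ≤ K * ∫ ω, |Z ω| ∂P)
    (hpos : ∀ A : Set Ω, MeasurableSet[m'] A → 0 ≤ ψ (A.indicator fun _ => (1:ℝ))) :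
    ∃ z : Ω → ℝ, Measurable[m'] z ∧ (∀ ω, 0 ≤ z ω ∧ z ω ≤ K) ∧
      ∀ Z : Ω → ℝ, Measurable[m'] Z → Integrable Z P → ψ Z = ∫ ω, Z ω * z ω ∂P := by
  classical
  set P' : @Measure Ω m' := P.trim hle with hP'def
  haveI : IsFiniteMeasure P' := isFiniteMeasure_trim hle
  set φ : Set Ω → ℝ := fun A => ψ (A.indicator fun _ => (1:ℝ)) with hφdef
  have hind_meas : ∀ A : Set Ω, MeasurableSet[m'] A →
      Measurable[m'] (A.indicator fun _ => (1:ℝ)) := fun A hA =>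
    measurable_const.indicator hA
  have hind_int : ∀ A : Set Ω, MeasurableSet[m'] A →
      Integrable (A.indicator fun _ => (1:ℝ)) P := fun A hA =>
    ind_integrable P (hle _ hA)
  have hφ_nonneg : ∀ A, MeasurableSet[m'] A → 0 ≤ φ A := hpos
  have hφ_le : ∀ A, MeasurableSet[m'] A → φ A ≤ K * (P A).toReal := by
    intro A hA
    have h2 : ∫ ω, |A.indicator (fun _ => (1:ℝ)) ω| ∂P = (P A).toReal :=
      ind_abs_integral P (hle _ hA)
    have := (le_abs_self _).trans (hbound _ (hind_meas A hA) (hind_int A hA))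
    rwa [h2] at this
  have hφ_union : ∀ A B : Set Ω, Disjoint A B → φ (A ∪ B) = φ A + φ B := by
    intro A B hAB
    have h1 : (A ∪ B).indicator (fun _ => (1:ℝ)) =
        A.indicator (fun _ => (1:ℝ)) + B.indicator fun _ => (1:ℝ) :=
      Set.indicator_union_of_disjoint hAB _
    rw [hφdef]
    dsimp only
    rw [h1, hadd]
  have hφ_empty : φ ∅ = 0 := by
    have h0 : φ ∅ + φ ∅ = φ ∅ := by
      rw [← hφ_union ∅ ∅ disjoint_bot_left, Set.union_empty]
    linarith
  -- sigma additivity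
  have hσ : ∀ (A : ℕ → Set Ω), (∀ i, MeasurableSet[m'] (A i)) → Pairwise (Function.onFun Disjoint A) →
      ENNReal.ofReal (φ (⋃ i, A i)) = ∑' i, ENNReal.ofReal (φ (A i)) := by
    intro A hA hd
    set U := ⋃ i, A i with hU
    set B : ℕ → Set Ω := fun N => ⋃ i, ⋃ (_ : i < N), A i with hB
    have hBsub : ∀ N, B N ⊆ U := fun N => Set.iUnion₂_subset fun i _ => Set.subset_iUnion A i
    have hBdisj : ∀ N, Disjoint (B N) (A N) := by
      intro N
      refine Set.disjoint_left.mpr ?_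
      rintro x hx hxN
      simp only [hB, Set.mem_iUnion] at hx
      obtain ⟨i, hiN, hxi⟩ := hx
      exact Set.disjoint_left.mp (hd (ne_of_lt hiN)) hxi hxN
    have hDmeas : ∀ N, MeasurableSet[m'] (U \ B N) := fun N =>
      (MeasurableSet.iUnion hA).diff
        (MeasurableSet.iUnion fun i => MeasurableSet.iUnion fun _ => hA i)
    have hBsucc : ∀ N, B (N + 1) = B N ∪ A N := by
      intro N
      rw [hB]
      ext x
      simp only [Set.mem_iUnion, Set.mem_union, Nat.lt_succ_iff_lt_or_eq]
      constructor
      · rintro ⟨i, hi | rfl, hx⟩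
        · exact Or.inl ⟨i, hi, hx⟩
        · exact Or.inr hx
      · rintro (⟨i, hi, hx⟩ | hx)
        · exact ⟨i, Or.inl hi, hx⟩
        · exact ⟨N, Or.inr rfl, hx⟩
    have hpart : ∀ N, ∑ i ∈ Finset.range N, φ (A i) = φ (B N) := by
      intro N
      induction N with
      | zero =>
        have : B 0 = ∅ := by
          rw [hB]; simp
        simp [this, hφ_empty]
      | succ N ih =>
        rw [Finset.sum_range_succ, ih, ← hφ_union _ _ (hBdisj N), ← hBsucc N]
    have hUD : ∀ N, φ U = φ (B N) + φ (U \ B N) := by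
      intro N
      conv_lhs => rw [← Set.union_diff_cancel (hBsub N)]
      exact hφ_union _ _ disjoint_sdiff_self_right
    have hmeasD : Tendsto (fun N => P (U \ B N)) atTop (𝓝 0) := by
      have hanti : Antitone fun N => U \ B N := by
        intro a b hab
        refine Set.diff_subset_diff_right fun x hx => ?_
        simp only [hB, Set.mem_iUnion] at hx ⊢
        obtain ⟨i, hi, h⟩ := hx
        exact ⟨i, lt_of_lt_of_le hi hab, h⟩
      have hiInter : ⋂ N, (U \ B N) = ∅ := by
        refine Set.eq_empty_iff_forall_notMem.mpr fun x hx => ?_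
        simp only [Set.mem_iInter, Set.mem_diff] at hx
        obtain ⟨hxU, -⟩ := hx 0
        rw [hU, Set.mem_iUnion] at hxU
        obtain ⟨k, hk⟩ := hxU
        refine (hx (k+1)).2 ?_
        rw [hB]
        exact Set.mem_iUnion.mpr ⟨k, Set.mem_iUnion.mpr ⟨Nat.lt_succ_self k, hk⟩⟩
      have := tendsto_measure_iInter_atTop (μ := P)
        (fun N => (hle _ (hDmeas N)).nullMeasurableSet) hanti ⟨0, measure_ne_top P _⟩
      rw [hiInter] at this
      simpa [Function.comp_def] using this
    have htoReal : Tendsto (fun N => (P (U \ B N)).toReal) atTop (𝓝 0) := by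
      have := (ENNReal.tendsto_toReal (a := 0) (by simp)).comp hmeasD
      simpa [Function.comp_def] using this
    have hφD : Tendsto (fun N => φ (U \ B N)) atTop (𝓝 0) := by
      refine squeeze_zero (fun N => hφ_nonneg _ (hDmeas N)) (fun N => hφ_le _ (hDmeas N)) ?_
      simpa using htoReal.const_mul K
    have hsum : HasSum (fun n => φ (A n)) (φ U) := by
      rw [hasSum_iff_tendsto_nat_of_nonneg (fun i => hφ_nonneg _ (hA i))]
      have heq : ∀ N, ∑ i ∈ Finset.range N, φ (A i) = φ U - φ (U \ B N) := by
        intro N; rw [hpart N, hUD N]; ring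
      simp only [heq]
      simpa using tendsto_const_nhds.sub hφD
    rw [← hsum.tsum_eq]
    exact ENNReal.ofReal_tsum_of_nonneg (fun n => hφ_nonneg _ (hA n)) hsum.summable
  -- the measure ν and its density
  set ν : @Measure Ω m' := @Measure.ofMeasurable Ω m' (fun A _ => ENNReal.ofReal (φ A))
    (by rw [hφ_empty]; simp) (fun A hA hd => hσ A hA hd) with hνdef
  have hνval : ∀ A, MeasurableSet[m'] A → ν A = ENNReal.ofReal (φ A) := fun A hA =>
    @Measure.ofMeasurable_apply Ω m' _ _ _ A hA
  have hν_le : ∀ A, MeasurableSet[m'] A → ν A ≤ ENNReal.ofReal K * P' A := by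
    intro A hA
    rw [hνval A hA, hP'def, trim_measurableSet_eq hle hA]
    calc ENNReal.ofReal (φ A) ≤ ENNReal.ofReal (K * (P A).toReal) :=
          ENNReal.ofReal_le_ofReal (hφ_le A hA)
      _ = ENNReal.ofReal K * ENNReal.ofReal ((P A).toReal) := ENNReal.ofReal_mul hK
      _ ≤ ENNReal.ofReal K * P A := mul_le_mul_right ENNReal.ofReal_toReal_le _
  haveI : IsFiniteMeasure ν := by
    constructor
    rw [hνval _ MeasurableSet.univ]
    exact ENNReal.ofReal_lt_top
  have hac : ν ≪ P' := by
    refine Measure.AbsolutelyContinuous.mk fun A hA h0 => ?_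
    refine le_antisymm ((hν_le A hA).trans ?_) zero_le
    rw [h0, mul_zero]
  set g : Ω → ℝ≥0∞ := @Measure.rnDeriv Ω m' ν P' with hgdef
  have hg_meas : Measurable[m'] g := Measure.measurable_rnDeriv ν P'
  have hgint : ∀ A : Set Ω, MeasurableSet[m'] A → ∫⁻ ω in A, g ω ∂P' = ν A := fun A hA =>
    Measure.setLIntegral_rnDeriv hac A
  have hgK : g ≤ᵐ[P'] fun _ => ENNReal.ofReal K := by
    refine ae_le_of_forall_setLIntegral_le_of_sigmaFinite (μ := P') hg_meas fun s hs _ => ?_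
    rw [hgint s hs, setLIntegral_const]
    exact hν_le s hs
  -- the density
  set z : Ω → ℝ := fun ω => min (g ω).toReal K with hzdef
  have hz_meas : Measurable[m'] z := (hg_meas.ennreal_toReal).min measurable_const
  have hz_bdd : ∀ ω, 0 ≤ z ω ∧ z ω ≤ K := fun ω =>
    ⟨le_min ENNReal.toReal_nonneg hK, min_le_right _ _⟩
  have hz_ae : (fun ω => ENNReal.ofReal (z ω)) =ᵐ[P'] g := by
    filter_upwards [hgK] with ω hω
    have hne : g ω ≠ ∞ := (lt_of_le_of_lt hω ENNReal.ofReal_lt_top).ne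
    have hle' : (g ω).toReal ≤ K := ENNReal.toReal_le_of_le_ofReal hK hω
    rw [hzdef]
    dsimp only
    rw [min_eq_left hle', ENNReal.ofReal_toReal hne]
  have hz_sm : StronglyMeasurable[m'] z := hz_meas.stronglyMeasurable
  have hcore : ∀ A, MeasurableSet[m'] A → φ A = ∫ ω in A, z ω ∂P := by
    intro A hA
    have h1 : ∫⁻ ω in A, ENNReal.ofReal (z ω) ∂P' = ENNReal.ofReal (φ A) := by
      rw [lintegral_congr_ae (ae_restrict_of_ae hz_ae), hgint A hA, hνval A hA]
    have h2 : ∫ ω in A, z ω ∂P' = φ A := by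
      rw [integral_eq_lintegral_of_nonneg_ae (Eventually.of_forall fun ω => (hz_bdd ω).1)
        hz_sm.aestronglyMeasurable]
      rw [h1, ENNReal.toReal_ofReal (hφ_nonneg A hA)]
    rw [setIntegral_trim hle hz_sm hA, ← hP'def, h2]
  -- integrability helpers
  have hint_mul : ∀ W : Ω → ℝ, Measurable[m'] W → Integrable W P →
      Integrable (fun ω => W ω * z ω) P := by
    intro W hWm hWi
    refine Integrable.mono' (hWi.abs.mul_const K) ?_ (Eventually.of_forall fun ω => ?_)
    · exact ((hWm.mono hle le_rfl).mul (hz_meas.mono hle le_rfl)).aestronglyMeasurable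
    · rw [Real.norm_eq_abs, abs_mul]
      refine mul_le_mul_of_nonneg_left ?_ (abs_nonneg _)
      rw [abs_of_nonneg (hz_bdd ω).1]
      exact (hz_bdd ω).2
  have hsf_int : ∀ f : @SimpleFunc Ω m' ℝ, Integrable f P := by
    intro f
    obtain ⟨C, hC⟩ := sf_norm_le f
    refine Integrable.mono' (integrable_const C) ?_ (Eventually.of_forall fun ω => hC ω)
    exact ((sf_measurable f).mono hle le_rfl).aestronglyMeasurable
  -- representation on simple functions
  have hsimp : ∀ f : @SimpleFunc Ω m' ℝ, ψ f = ∫ ω, f ω * z ω ∂P := by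
    intro f
    refine @SimpleFunc.induction Ω ℝ m' _ (fun f => ψ ⇑f = ∫ ω, f ω * z ω ∂P) ?_ ?_ f
    · intro c s hs
      simp only [SimpleFunc.coe_piecewise, SimpleFunc.coe_const]
      have h1 : s.piecewise (Function.const Ω c) (Function.const Ω 0)
          = c • Set.indicator s fun _ => (1:ℝ) := by
        funext ω; by_cases h : ω ∈ s <;> simp [Set.piecewise, Set.indicator, h]
      rw [h1, hsmul]
      have h2 : ψ (s.indicator fun _ => (1:ℝ)) = ∫ ω in s, z ω ∂P := hcore s hs
      rw [h2, ind_mul_integral P (hle _ hs)]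
    · intro f g' hdisj hf hg'
      have h5 : (fun ω => (⇑f + ⇑g') ω * z ω) = fun ω => f ω * z ω + g' ω * z ω := by
        funext ω; simp [add_mul]
      rw [SimpleFunc.coe_add, hadd, hf, hg', h5,
        integral_add (hint_mul _ (sf_measurable f) (hsf_int f))
          (hint_mul _ (sf_measurable g') (hsf_int g'))]
  -- conclusion via L¹ approximation
  refine ⟨z, hz_meas, hz_bdd, ?_⟩
  intro Z hZm hZi
  have hZi' : Integrable Z P' := hZi.trim hle hZm.stronglyMeasurable
  obtain ⟨Zn, htend⟩ := sf_approx P' hZm hZi'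
  have hmeas_n : ∀ n, Measurable[m'] fun ω => (‖Zn n ω - Z ω‖₊ : ℝ≥0∞) := fun n =>
    ((sf_measurable (Zn n)).sub hZm).enorm
  have htrim : ∀ n, ∫⁻ ω, (‖Zn n ω - Z ω‖₊ : ℝ≥0∞) ∂P'
      = ∫⁻ ω, (‖Zn n ω - Z ω‖₊ : ℝ≥0∞) ∂P := fun n => by
    rw [hP'def]; exact lintegral_trim hle (hmeas_n n)
  simp only [htrim] at htend
  have hZn_int : ∀ n, Integrable (Zn n) P := fun n => hsf_int (Zn n)
  have hL1 : Tendsto (fun n => ∫ ω, |Zn n ω - Z ω| ∂P) atTop (𝓝 0) := by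
    have h1 : ∀ n, ∫ ω, |Zn n ω - Z ω| ∂P = (∫⁻ ω, (‖Zn n ω - Z ω‖₊ : ℝ≥0∞) ∂P).toReal := by
      intro n
      exact integral_norm_eq_lintegral_enorm
        ((((sf_measurable (Zn n)).sub hZm).mono hle le_rfl)).aestronglyMeasurable
    simp only [h1]
    have := (ENNReal.tendsto_toReal (a := 0) (by simp)).comp htend
    simpa [Function.comp_def] using this
  have hψtend : Tendsto (fun n => ψ ⇑(Zn n)) atTop (𝓝 (ψ Z)) := by
    rw [tendsto_iff_dist_tendsto_zero]
    refine squeeze_zero (fun n => dist_nonneg) (fun n => ?_) (by simpa using hL1.const_mul K)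
    have hsub : ψ ⇑(Zn n) - ψ Z = ψ (⇑(Zn n) - Z) := by
      have := hadd (⇑(Zn n) - Z) Z
      rw [sub_add_cancel] at this
      linarith
    rw [Real.dist_eq, hsub]
    exact hbound _ ((sf_measurable (Zn n)).sub hZm) ((hZn_int n).sub hZi)
  have hint_tend : Tendsto (fun n => ∫ ω, Zn n ω * z ω ∂P) atTop (𝓝 (∫ ω, Z ω * z ω ∂P)) := by
    rw [tendsto_iff_dist_tendsto_zero]
    refine squeeze_zero (fun n => dist_nonneg) (fun n => ?_) (by simpa using hL1.const_mul K)
    rw [Real.dist_eq, ← integral_sub (hint_mul _ (sf_measurable (Zn n)) (hZn_int n))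
      (hint_mul _ hZm hZi)]
    have h4 : (fun ω => Zn n ω * z ω - Z ω * z ω) = fun ω => (Zn n ω - Z ω) * z ω := by
      funext ω; ring
    rw [h4]
    calc |∫ ω, (Zn n ω - Z ω) * z ω ∂P| ≤ ∫ ω, |(Zn n ω - Z ω) * z ω| ∂P :=
          abs_integral_le_integral_abs_aux
      _ ≤ ∫ ω, |Zn n ω - Z ω| * K ∂P := by
          refine integral_mono ((hint_mul _ ((sf_measurable (Zn n)).sub hZm)
            ((hZn_int n).sub hZi)).abs) (((hZn_int n).sub hZi).abs.mul_const K)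
            fun ω => ?_
          rw [abs_mul]
          refine mul_le_mul_of_nonneg_left ?_ (abs_nonneg _)
          rw [abs_of_nonneg (hz_bdd ω).1]
          exact (hz_bdd ω).2
      _ = K * ∫ ω, |Zn n ω - Z ω| ∂P := by
          rw [integral_mul_const, mul_comm]
  have hψ' : Tendsto (fun n => ∫ ω, Zn n ω * z ω ∂P) atTop (𝓝 (ψ Z)) :=
    hψtend.congr fun n => hsimp (Zn n)
  exact tendsto_nhds_unique hψ' hint_tend

end Aux

/-- for `p = 1` and a nonnegative linear functional with `|π z| ≤ K‖z‖_s`,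
for every stopping time `τ ≤ T` there is an `𝓕_τ`-measurable `z^τ` with
`0 ≤ z^τ ≤ K` a.s. representing `Z ↦ π(δ_τ Z)` on `L¹(𝓕_τ)`. -/
theorem exists_representing_density_at_stopping_time
    {Ω : Type*} [m : MeasurableSpace Ω] (P : Measure Ω) [IsProbabilityMeasure P]
    (ℱ : Filtration ℝ m) (T : ℝ) (hT : 0 < T)
    (π : (Ω → ℝ → ℝ) →ₗ[ℝ] ℝ)
    (hπ : ∀ x, IsPlan P ℱ T 1 x → 0 ≤ π x)
    (K : ℝ) (hK : 0 ≤ K)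
    (hbd : ∀ z, MemE P ℱ T 1 z → |π z| ≤ K * strongNorm P T z)
    (τ : Ω → ℝ) (hτ : IsBddStoppingTime ℱ T τ) :
    ∃ zτ : Ω → ℝ, Measurable[hτ.1.measurableSpace] zτ ∧
      (∀ᵐ ω ∂P, 0 ≤ zτ ω ∧ zτ ω ≤ K) ∧
      ∀ Z : Ω → ℝ, Measurable[hτ.1.measurableSpace] Z → Integrable Z P →
        π (deltaPlan τ Z) = ∫ ω, Z ω * zτ ω ∂P := by
  obtain ⟨z, hz1, hz2, hz3⟩ := exists_density_repr P hτ.1.measurableSpace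
    hτ.1.measurableSpace_le (fun Z => π (deltaPlan τ Z)) hK
    (fun Z W => by rw [deltaPlan_add, map_add])
    (fun c Z => by rw [deltaPlan_smul, _root_.map_smul, smul_eq_mul])
    (fun Z hZm hZi => abs_pi_deltaPlan_le P ℱ π hK hbd hτ hZm hZi)
    (fun A hA => hπ _ (isPlan_deltaPlan P ℱ hτ (measurable_const.indicator hA)
      (fun ω => Set.indicator_nonneg (fun _ _ => zero_le_one) ω)
      (ind_integrable P (hτ.1.measurableSpace_le _ hA))))
  exact ⟨z, hz1, Filter.Eventually.of_forall hz2, hz3⟩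

end Equil
end
end

section
/- Let π be a nonnegative linear functional on E, and for each stopping time τ ≤ T let z^τ be an 𝓕_τ-measurable, nonnegative, integrable random variable satisfying π(δ_τ Z) = E[Z · z^τ] for every bounded 𝓕_τ-measurable random variable Z. Then the family (z^τ)_{τ stopping time ≤ T} is a 𝒯-system: for any two stopping times σ, τ ≤ T, z^σ = z^τ almost surely on the event {σ = τ}. -/
open MeasureTheory Set Filter
open scoped ENNReal Topology Classical

noncomputable section

namespace Equil

variable {Ω : Type*} [m : MeasurableSpace Ω]

lemma aux_eq_meas {σ τ : Ω → ℝ} {ℱ : Filtration ℝ m}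
    (hσ : IsStoppingTime ℱ (fun ω => (σ ω : WithTop ℝ)))
    (hτ : IsStoppingTime ℱ (fun ω => (τ ω : WithTop ℝ))) :
    MeasurableSet[hσ.measurableSpace] {ω | σ ω = τ ω} := by
  have := hσ.measurableSet_eq_stopping_time hτ
  simpa using this

/-- Auxiliary: if `s` is `𝓕_τ`-measurable then `s ∩ {σ = τ}` is `𝓕_σ`-measurable. -/
lemma aux_inter_eq_mem {σ τ : Ω → ℝ} {ℱ : Filtration ℝ m} (hσ : IsStoppingTime ℱ (fun ω => (σ ω : WithTop ℝ)))
    (hτ : IsStoppingTime ℱ (fun ω => (τ ω : WithTop ℝ))) {s : Set Ω} (hs : MeasurableSet[hτ.measurableSpace] s) :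
    MeasurableSet[hσ.measurableSpace] (s ∩ {ω | σ ω = τ ω}) := by
  have hA : MeasurableSet[hσ.measurableSpace] {ω | σ ω = τ ω} :=
    aux_eq_meas hσ hτ
  rw [hσ.measurableSet]
  refine ⟨((hτ.measurableSet _).1 hs).1.inter ((hσ.measurableSet _).1 hA).1, ?_⟩
  intro j
  have hAj : MeasurableSet[ℱ j] ({ω | σ ω = τ ω} ∩ {ω | (σ ω : WithTop ℝ) ≤ (j : WithTop ℝ)}) :=
    ((hσ.measurableSet _).1 hA).2 j
  have hsj : MeasurableSet[ℱ j] (s ∩ {ω | (τ ω : WithTop ℝ) ≤ (j : WithTop ℝ)}) :=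
    ((hτ.measurableSet _).1 hs).2 j
  have hset : (s ∩ {ω | σ ω = τ ω}) ∩ {ω | (σ ω : WithTop ℝ) ≤ (j : WithTop ℝ)}
      = (s ∩ {ω | (τ ω : WithTop ℝ) ≤ (j : WithTop ℝ)}) ∩
        ({ω | σ ω = τ ω} ∩ {ω | (σ ω : WithTop ℝ) ≤ (j : WithTop ℝ)}) := by
    ext ω
    simp only [Set.mem_inter_iff, Set.mem_setOf_eq]
    constructor
    · rintro ⟨⟨hsω, he⟩, hl⟩
      exact ⟨⟨hsω, he ▸ hl⟩, he, hl⟩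
    · rintro ⟨⟨hsω, _⟩, he, hl⟩
      exact ⟨⟨hsω, he⟩, hl⟩
  have := hsj.inter hAj
  rw [← hset] at this
  exact this

/-- Auxiliary: if `g` is `𝓕_τ`-measurable then `1_{σ = τ} · g` is `𝓕_σ`-measurable. -/
lemma aux_indicator_meas {σ τ : Ω → ℝ} {ℱ : Filtration ℝ m} (hσ : IsStoppingTime ℱ (fun ω => (σ ω : WithTop ℝ)))
    (hτ : IsStoppingTime ℱ (fun ω => (τ ω : WithTop ℝ))) {g : Ω → ℝ} (hg : Measurable[hτ.measurableSpace] g) :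
    Measurable[hσ.measurableSpace] ({ω | σ ω = τ ω}.indicator g) := by
  intro B hB
  rw [Set.indicator_preimage, Set.ite]
  refine MeasurableSet.union (aux_inter_eq_mem hσ hτ (hg hB)) ?_
  exact MeasurableSet.diff (measurable_const hB) (aux_eq_meas hσ hτ)

/-- Auxiliary: the key null-set argument, stated asymmetrically so that it can be
applied twice (with the roles of `σ` and `τ` swapped). -/
lemma aux_null (P : Measure Ω) [IsProbabilityMeasure P] (ℱ : Filtration ℝ m)
    (π : (Ω → ℝ → ℝ) →ₗ[ℝ] ℝ) (σ τ : Ω → ℝ)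
    (hσ : IsStoppingTime ℱ (fun ω => (σ ω : WithTop ℝ))) (hτ : IsStoppingTime ℱ (fun ω => (τ ω : WithTop ℝ))) (zσ zτ : Ω → ℝ)
    (hzσm : Measurable[hσ.measurableSpace] zσ)
    (hzτm : Measurable[hτ.measurableSpace] zτ)
    (hzσi : Integrable zσ P) (hzτi : Integrable zτ P)
    (hσrep : ∀ Z : Ω → ℝ, Measurable[hσ.measurableSpace] Z → (∃ C, ∀ ω, |Z ω| ≤ C) →
      π (deltaPlan σ Z) = ∫ ω, Z ω * zσ ω ∂P)
    (hτrep : ∀ Z : Ω → ℝ, Measurable[hτ.measurableSpace] Z → (∃ C, ∀ ω, |Z ω| ≤ C) →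
      π (deltaPlan τ Z) = ∫ ω, Z ω * zτ ω ∂P) :
    P {ω | {x | σ x = τ x}.indicator zτ ω < {x | σ x = τ x}.indicator zσ ω} = 0 := by
  set A : Set Ω := {x | σ x = τ x} with hA_def
  have hAsymm : A = {x | τ x = σ x} := by ext x; exact eq_comm
  have hAσ : MeasurableSet[hσ.measurableSpace] A := aux_eq_meas hσ hτ
  have hAτ : MeasurableSet[hτ.measurableSpace] A := by
    rw [hAsymm]; exact aux_eq_meas hτ hσ
  set g1 : Ω → ℝ := A.indicator zσ with hg1_def
  set g2 : Ω → ℝ := A.indicator zτ with hg2_def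
  have hg1σ : Measurable[hσ.measurableSpace] g1 := hzσm.indicator hAσ
  have hg2τ : Measurable[hτ.measurableSpace] g2 := hzτm.indicator hAτ
  have hg1τ : Measurable[hτ.measurableSpace] g1 := by
    have := aux_indicator_meas hτ hσ hzσm
    rwa [← hAsymm] at this
  have hg2σ : Measurable[hσ.measurableSpace] g2 := by
    have := aux_indicator_meas hσ hτ hzτm
    rwa [← hA_def] at this
  set D : Set Ω := {ω | g2 ω < g1 ω} with hD_def
  have hDσ : MeasurableSet[hσ.measurableSpace] D := measurableSet_lt hg2σ hg1σ
  have hDτ : MeasurableSet[hτ.measurableSpace] D := measurableSet_lt hg2τ hg1τ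
  have hDm : MeasurableSet D := hσ.measurableSpace_le _ hDσ
  have hDsubA : D ⊆ A := by
    intro ω hω
    by_contra hωA
    have h1 : g1 ω = 0 := Set.indicator_of_notMem hωA _
    have h2 : g2 ω = 0 := Set.indicator_of_notMem hωA _
    have : g2 ω < g1 ω := hω
    rw [h1, h2] at this
    exact lt_irrefl _ this
  have hDlt : ∀ ω ∈ D, zτ ω < zσ ω := by
    intro ω hω
    have hωA : ω ∈ A := hDsubA hω
    have : g2 ω < g1 ω := hω
    rwa [hg1_def, hg2_def, Set.indicator_of_mem hωA, Set.indicator_of_mem hωA] at this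
  set Z : Ω → ℝ := D.indicator (fun _ => (1 : ℝ)) with hZ_def
  have hZσ : Measurable[hσ.measurableSpace] Z := measurable_const.indicator hDσ
  have hZτ : Measurable[hτ.measurableSpace] Z := measurable_const.indicator hDτ
  have hZbd : ∃ C, ∀ ω, |Z ω| ≤ C := by
    refine ⟨1, fun ω => ?_⟩
    by_cases hω : ω ∈ D
    · rw [hZ_def, Set.indicator_of_mem hω]; norm_num
    · rw [hZ_def, Set.indicator_of_notMem hω]; norm_num
  have hplans : deltaPlan σ Z = deltaPlan τ Z := by
    funext ω t
    simp only [deltaPlan]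
    by_cases hω : ω ∈ D
    · rw [show σ ω = τ ω from hDsubA hω]
    · have hZω : Z ω = 0 := Set.indicator_of_notMem hω _
      rw [hZω]
      simp
  have hZσ_ind : ∀ ω, Z ω * zσ ω = D.indicator zσ ω := by
    intro ω
    by_cases hω : ω ∈ D
    · simp [hZ_def, Set.indicator_of_mem hω]
    · simp [hZ_def, Set.indicator_of_notMem hω]
  have hZτ_ind : ∀ ω, Z ω * zτ ω = D.indicator zτ ω := by
    intro ω
    by_cases hω : ω ∈ D
    · simp [hZ_def, Set.indicator_of_mem hω]
    · simp [hZ_def, Set.indicator_of_notMem hω]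
  have hint : ∫ ω in D, zσ ω ∂P = ∫ ω in D, zτ ω ∂P := by
    have h1 : π (deltaPlan σ Z) = ∫ ω, Z ω * zσ ω ∂P := hσrep Z hZσ hZbd
    have h2 : π (deltaPlan τ Z) = ∫ ω, Z ω * zτ ω ∂P := hτrep Z hZτ hZbd
    have h3 : ∫ ω, Z ω * zσ ω ∂P = ∫ ω, Z ω * zτ ω ∂P := by
      rw [← h1, ← h2, hplans]
    calc ∫ ω in D, zσ ω ∂P = ∫ ω, D.indicator zσ ω ∂P := (integral_indicator hDm).symm
      _ = ∫ ω, Z ω * zσ ω ∂P := by simp_rw [hZσ_ind]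
      _ = ∫ ω, Z ω * zτ ω ∂P := h3
      _ = ∫ ω, D.indicator zτ ω ∂P := by simp_rw [hZτ_ind]
      _ = ∫ ω in D, zτ ω ∂P := integral_indicator hDm
  -- Conclude `P D = 0` from `∫_D (zσ - zτ) = 0` and `zσ - zτ > 0` on `D`.
  set f : Ω → ℝ := fun ω => zσ ω - zτ ω with hf_def
  have hfi : IntegrableOn f D P := (hzσi.sub hzτi).integrableOn
  have hf_nonneg : 0 ≤ᵐ[P.restrict D] f :=
    ae_restrict_of_forall_mem hDm (fun ω hω => le_of_lt (sub_pos.2 (hDlt ω hω)))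
  have hf_int_zero : ∫ ω in D, f ω ∂P = 0 := by
    rw [hf_def]
    rw [integral_sub (hzσi.integrableOn) (hzτi.integrableOn), hint, sub_self]
  have hPD : P D = 0 := by
    by_contra hne
    have hpos : 0 < P D := pos_iff_ne_zero.mpr hne
    have hsub : D ⊆ Function.support f ∩ D := by
      intro ω hω
      refine ⟨?_, hω⟩
      exact ne_of_gt (sub_pos.2 (hDlt ω hω))
    have hpos' : 0 < P (Function.support f ∩ D) :=
      lt_of_lt_of_le hpos (measure_mono hsub)
    have := (setIntegral_pos_iff_support_of_nonneg_ae hf_nonneg hfi).2 hpos'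
    rw [hf_int_zero] at this
    exact lt_irrefl _ this
  exact hPD

/-- the densities representing a nonnegative linear functional at stopping
times form a `𝒯`-system: `z^σ = z^τ` a.s. on `{σ = τ}`. -/
theorem density_family_is_T_system
    {Ω : Type*} [m : MeasurableSpace Ω] (P : Measure Ω) [IsProbabilityMeasure P]
    (ℱ : Filtration ℝ m) (T : ℝ) (hT : 0 < T)
    (p : ℝ≥0∞) (hp : 1 ≤ p) (hp' : p ≠ ∞)
    (π : (Ω → ℝ → ℝ) →ₗ[ℝ] ℝ)
    (hπ : ∀ x, IsPlan P ℱ T p x → 0 ≤ π x)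
    (σ τ : Ω → ℝ) (hσ : IsBddStoppingTime ℱ T σ) (hτ : IsBddStoppingTime ℱ T τ)
    (zσ zτ : Ω → ℝ)
    (hzσm : Measurable[hσ.1.measurableSpace] zσ) (hzσ0 : ∀ᵐ ω ∂P, 0 ≤ zσ ω)
    (hzσi : Integrable zσ P)
    (hzτm : Measurable[hτ.1.measurableSpace] zτ) (hzτ0 : ∀ᵐ ω ∂P, 0 ≤ zτ ω)
    (hzτi : Integrable zτ P)
    (hσrep : ∀ Z : Ω → ℝ, Measurable[hσ.1.measurableSpace] Z → (∃ C, ∀ ω, |Z ω| ≤ C) →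
      π (deltaPlan σ Z) = ∫ ω, Z ω * zσ ω ∂P)
    (hτrep : ∀ Z : Ω → ℝ, Measurable[hτ.1.measurableSpace] Z → (∃ C, ∀ ω, |Z ω| ≤ C) →
      π (deltaPlan τ Z) = ∫ ω, Z ω * zτ ω ∂P) :
    ∀ᵐ ω ∂P, σ ω = τ ω → zσ ω = zτ ω := by
  set A : Set Ω := {x | σ x = τ x} with hA_def
  have hAsymm : {x | τ x = σ x} = A := by ext x; exact eq_comm
  have h1 : P {ω | A.indicator zτ ω < A.indicator zσ ω} = 0 :=
    aux_null P ℱ π σ τ hσ.1 hτ.1 zσ zτ hzσm hzτm hzσi hzτi hσrep hτrep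
  have h2 : P {ω | A.indicator zσ ω < A.indicator zτ ω} = 0 := by
    have := aux_null P ℱ π τ σ hτ.1 hσ.1 zτ zσ hzτm hzσm hzτi hzσi hτrep hσrep
    rwa [hAsymm] at this
  have hunion : P ({ω | A.indicator zτ ω < A.indicator zσ ω} ∪
      {ω | A.indicator zσ ω < A.indicator zτ ω}) = 0 :=
    measure_union_null h1 h2
  rw [ae_iff]
  refine measure_mono_null ?_ hunion
  intro ω hω
  push_neg at hω
  obtain ⟨heq, hne⟩ := hω
  have hωA : ω ∈ A := heq
  rcases lt_or_gt_of_ne hne with h | h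
  · right
    show A.indicator zσ ω < A.indicator zτ ω
    rwa [Set.indicator_of_mem hωA, Set.indicator_of_mem hωA]
  · left
    show A.indicator zτ ω < A.indicator zσ ω
    rwa [Set.indicator_of_mem hωA, Set.indicator_of_mem hωA]

end Equil
end
end

section
/- For any two stopping times σ, τ with values in [0,T], the intertemporal distance between the corresponding Dirac consumption plans satisfies ‖δ_τ − δ_σ‖ = ( E|τ − σ| )^{1/p}. Consequently, if (τ_n) is a sequence of stopping times with τ_n → τ almost surely, then δ_{τ_n} → δ_τ in the intertemporal norm. -/
open MeasureTheory Set Filter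
open scoped ENNReal Topology Classical

noncomputable section

namespace Equil

variable {Ω : Type*} [m : MeasurableSpace Ω]

private lemma key_indicator (c : ℝ) (hc : c ≠ 0) (u v t : ℝ) :
    |(if u ≤ t then (1:ℝ) else 0) - (if v ≤ t then (1:ℝ) else 0)| ^ c
      = (Set.Ico (min u v) (max u v)).indicator (fun _ => (1:ℝ)) t := by
  rcases le_or_gt u t with h1 | h1 <;> rcases le_or_gt v t with h2 | h2
  · rw [if_pos h1, if_pos h2, Set.indicator_of_notMem]
    · simp [Real.zero_rpow hc]
    · rintro ⟨-, hlt⟩; exact absurd hlt (not_lt.2 (max_le h1 h2))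
  · rw [if_pos h1, if_neg (not_le.2 h2),
      Set.indicator_of_mem (Set.mem_Ico.2 ⟨le_trans (min_le_left u v) h1,
        lt_of_lt_of_le h2 (le_max_right u v)⟩)]
    norm_num
  · rw [if_neg (not_le.2 h1), if_pos h2,
      Set.indicator_of_mem (Set.mem_Ico.2 ⟨le_trans (min_le_right u v) h2,
        lt_of_lt_of_le h1 (le_max_left u v)⟩)]
    norm_num
  · rw [if_neg (not_le.2 h1), if_neg (not_le.2 h2), Set.indicator_of_notMem]
    · simp [Real.zero_rpow hc]
    · rintro ⟨hle, -⟩; exact absurd hle (not_le.2 (lt_min h1 h2))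

/-- `‖δ_τ − δ_σ‖ = (E|τ − σ|)^{1/p}`; consequently `τ_n → τ` a.s. implies
`δ_{τ_n} → δ_τ` in the intertemporal norm. -/
theorem inorm_delta_sub_delta
    {Ω : Type*} [m : MeasurableSpace Ω] (P : Measure Ω) [IsProbabilityMeasure P]
    (ℱ : Filtration ℝ m) (T : ℝ) (hT : 0 < T)
    (p : ℝ≥0∞) (hp : 1 ≤ p) (hp' : p ≠ ∞) :
    (∀ σ τ : Ω → ℝ, IsBddStoppingTime ℱ T σ → IsBddStoppingTime ℱ T τ →
      inorm P T p (deltaPlan τ (fun _ => 1) - deltaPlan σ (fun _ => 1)) =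
        (∫ ω, |τ ω - σ ω| ∂P) ^ (1 / p.toReal)) ∧
    ∀ (τn : ℕ → Ω → ℝ) (τ : Ω → ℝ),
      (∀ n, IsBddStoppingTime ℱ T (τn n)) → IsBddStoppingTime ℱ T τ →
      (∀ᵐ ω ∂P, Tendsto (fun n => τn n ω) atTop (nhds (τ ω))) →
      Tendsto
        (fun n =>
          inorm P T p (deltaPlan (τn n) (fun _ => 1) - deltaPlan τ (fun _ => 1)))
        atTop (nhds 0) := by
  have hp0 : p ≠ 0 := (lt_of_lt_of_le zero_lt_one hp).ne'
  have hc : 0 < p.toReal := ENNReal.toReal_pos hp0 hp'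
  have main : ∀ σ τ : Ω → ℝ, (∀ ω, σ ω ∈ Set.Icc 0 T) → (∀ ω, τ ω ∈ Set.Icc 0 T) →
      inorm P T p (deltaPlan τ (fun _ => 1) - deltaPlan σ (fun _ => 1)) =
        (∫ ω, |τ ω - σ ω| ∂P) ^ (1 / p.toReal) := by
    intro σ τ hσ hτ
    unfold inorm
    refine congrArg (· ^ (1 / p.toReal)) (integral_congr_ae (ae_of_all _ fun ω => ?_))
    simp only [deltaPlan, Pi.sub_apply]
    have hTterm : |(if τ ω ≤ T then (1:ℝ) else 0) - (if σ ω ≤ T then (1:ℝ) else 0)|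
        ^ p.toReal = 0 := by
      rw [if_pos (hτ ω).2, if_pos (hσ ω).2, sub_self, abs_zero, Real.zero_rpow hc.ne']
    rw [hTterm, add_zero]
    have hfun : (fun t => |(if τ ω ≤ t then (1:ℝ) else 0) -
        (if σ ω ≤ t then (1:ℝ) else 0)| ^ p.toReal)
        = (Set.Ico (min (τ ω) (σ ω)) (max (τ ω) (σ ω))).indicator (fun _ => (1:ℝ)) :=
      funext fun t => key_indicator p.toReal hc.ne' _ _ t
    rw [hfun, MeasureTheory.setIntegral_indicator measurableSet_Ico,
      Set.inter_eq_self_of_subset_right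
        ((Set.Ico_subset_Icc_self).trans
          (Set.Icc_subset_Icc (le_min (hτ ω).1 (hσ ω).1)
            (max_le (hτ ω).2 (hσ ω).2))),
      MeasureTheory.setIntegral_const, Real.volume_real_Ico_of_le min_le_max,
      smul_eq_mul, mul_one,
      max_sub_min_eq_abs, abs_sub_comm]
  refine ⟨fun σ τ hσ hτ => main σ τ hσ.2 hτ.2, ?_⟩
  intro τn τ hτn hτ hconv
  have h1 : ∀ n, inorm P T p (deltaPlan (τn n) (fun _ => 1) - deltaPlan τ (fun _ => 1))
      = (∫ ω, |τn n ω - τ ω| ∂P) ^ (1 / p.toReal) :=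
    fun n => main τ (τn n) hτ.2 (hτn n).2
  simp only [h1]
  have hmeas : ∀ n, AEStronglyMeasurable (fun ω => |τn n ω - τ ω|) P := by
    intro n
    have m1 : Measurable (τn n) := by
      simpa using (((hτn n).1.measurable_of_le (i := T)
        fun ω => WithTop.coe_le_coe.2 ((hτn n).2 ω).2).mono (ℱ.le T) le_rfl).untopD 0
    have m2 : Measurable τ := by
      simpa using ((hτ.1.measurable_of_le (i := T)
        fun ω => WithTop.coe_le_coe.2 (hτ.2 ω).2).mono (ℱ.le T) le_rfl).untopD 0
    exact ((m1.sub m2).abs).aestronglyMeasurable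
  have h2 : Tendsto (fun n => ∫ ω, |τn n ω - τ ω| ∂P) atTop (nhds 0) := by
    have := MeasureTheory.tendsto_integral_of_dominated_convergence
      (F := fun n ω => |τn n ω - τ ω|) (f := fun _ => (0:ℝ)) (bound := fun _ => T)
      hmeas (integrable_const T)
      (fun n => ae_of_all _ fun ω => by
        have h1' := (hτn n).2 ω
        have h2' := hτ.2 ω
        simp only [Real.norm_eq_abs, abs_abs]
        rw [abs_sub_le_iff]
        constructor <;> [linarith [h1'.1, h1'.2, h2'.1, h2'.2];
          linarith [h1'.1, h1'.2, h2'.1, h2'.2]])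
      (by
        filter_upwards [hconv] with ω hω
        have : Tendsto (fun n => τn n ω - τ ω) atTop (nhds (τ ω - τ ω)) :=
          hω.sub tendsto_const_nhds
        rw [sub_self] at this
        simpa using this.abs)
    simpa using this
  have hcont : ContinuousAt (fun x : ℝ => x ^ (1 / p.toReal)) 0 :=
    Real.continuousAt_rpow_const 0 _ (Or.inr (by positivity))
  have := hcont.tendsto.comp h2
  rw [Real.zero_rpow (by positivity : (1 / p.toReal) ≠ 0)] at this
  exact this


end Equil
end
end

section
/- Let π be a compatible price and, for each stopping time τ ≤ T, let z^τ be an 𝓕_τ-measurable, nonnegative, integrable random variable satisfying π(δ_τ Z) = E[Z · z^τ] for every bounded 𝓕_τ-measurable Z; in particular E z^τ = π(δ_τ). Then the family (z^τ) is continuous in expectation: for every sequence of stopping times (τ_n) with τ_n → τ almost surely, lim_n E z^{τ_n} = E z^τ. -/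
open MeasureTheory Set Filter
open scoped ENNReal Topology Classical

noncomputable section

namespace Equil

variable {Ω : Type*} [m : MeasurableSpace Ω]

section Aux

variable {Ω : Type*} [m : MeasurableSpace Ω]

lemma isPlan_deltaOne (P : Measure Ω) [IsFiniteMeasure P] (ℱ : Filtration ℝ m) {T : ℝ} (p : ℝ≥0∞)
    {τ : Ω → ℝ} (hτ : IsBddStoppingTime ℱ T τ) :
    IsPlan P ℱ T p (deltaPlan τ (fun _ => 1)) := by
  constructor
  · intro ω s t hst
    simp only [deltaPlan]
    by_cases h : τ ω ≤ s
    · rw [if_pos h, if_pos (h.trans hst)]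
    · rw [if_neg h]; split <;> norm_num
  · intro ω t
    by_cases h : τ ω ≤ t
    · apply (continuousWithinAt_const (b := (1:ℝ))).congr_of_eventuallyEq
      · filter_upwards [self_mem_nhdsWithin] with s hs
        simp [deltaPlan, h.trans hs]
      · simp [deltaPlan, h]
    · apply (continuousWithinAt_const (b := (0:ℝ))).congr_of_eventuallyEq
      · have : Set.Iio (τ ω) ∈ nhdsWithin t (Set.Ici t) :=
          mem_nhdsWithin_of_mem_nhds (Iio_mem_nhds (lt_of_not_ge h))
        filter_upwards [this] with s hs
        simp [deltaPlan, not_le.mpr (Set.mem_Iio.mp hs)]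
      · simp [deltaPlan, h]
  · intro ω t ht
    simp [deltaPlan, not_le.mpr (lt_of_lt_of_le ht (hτ.2 ω).1)]
  · intro ω t ht
    simp [deltaPlan, (hτ.2 ω).2, (hτ.2 ω).2.trans ht]
  · intro t
    exact Measurable.ite (by have h := hτ.1 t; simp only [WithTop.coe_le_coe] at h; exact h) measurable_const measurable_const
  · have : (fun ω => deltaPlan τ (fun _ => (1:ℝ)) ω T) = fun _ => (1:ℝ) := by
      funext ω; simp [deltaPlan, (hτ.2 ω).2]
    rw [this]
    exact memLp_const 1

lemma inner_calc {a b T : ℝ} (ha : a ∈ Set.Icc 0 T) (hb : b ∈ Set.Icc 0 T)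
    {r : ℝ} (hr : 0 < r) :
    (∫ t in Set.Icc (0:ℝ) T,
      |(if a ≤ t then (1:ℝ) else 0) - (if b ≤ t then 1 else 0)| ^ r) = |a - b| := by
  have key : ∀ t, |(if a ≤ t then (1:ℝ) else 0) - (if b ≤ t then 1 else 0)| ^ r
      = (Set.Ico (min a b) (max a b)).indicator (fun _ => (1:ℝ)) t := by
    intro t
    by_cases h1 : a ≤ t <;> by_cases h2 : b ≤ t
    · rw [if_pos h1, if_pos h2, sub_self, abs_zero, Real.zero_rpow hr.ne',
        Set.indicator_of_notMem]
      intro h; exact absurd h.2 (not_lt.mpr (max_le h1 h2))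
    · rw [if_pos h1, if_neg h2, sub_zero, abs_one, Real.one_rpow,
        Set.indicator_of_mem]
      exact Set.mem_Ico.mpr ⟨(min_le_left a b).trans h1,
        lt_of_lt_of_le (lt_of_not_ge h2) (le_max_right a b)⟩
    · rw [if_neg h1, if_pos h2, zero_sub, abs_neg, abs_one, Real.one_rpow,
        Set.indicator_of_mem]
      exact Set.mem_Ico.mpr ⟨(min_le_right a b).trans h2,
        lt_of_lt_of_le (lt_of_not_ge h1) (le_max_left a b)⟩
    · rw [if_neg h1, if_neg h2, sub_self, abs_zero, Real.zero_rpow hr.ne',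
        Set.indicator_of_notMem]
      intro h
      rcases le_total a b with hab | hab
      · exact h1 (by simpa [min_eq_left hab] using (Set.mem_Ico.mp h).1)
      · exact h2 (by simpa [min_eq_right hab] using (Set.mem_Ico.mp h).1)
  simp_rw [key]
  rw [setIntegral_indicator measurableSet_Ico,
    Set.inter_eq_self_of_subset_right (fun x hx =>
      Set.mem_Icc.mpr ⟨(le_min ha.1 hb.1).trans (Set.mem_Ico.mp hx).1,
        (Set.mem_Ico.mp hx).2.le.trans (max_le ha.2 hb.2)⟩),
    setIntegral_const, measureReal_def, Real.volume_Ico, smul_eq_mul, mul_one,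
    ENNReal.toReal_ofReal (sub_nonneg.mpr min_le_max), max_sub_min_eq_abs, abs_sub_comm]

end Aux

/-- the `𝒯`-system representing a compatible price is continuous in
expectation: `τ_n → τ` a.s. implies `E z^{τ_n} → E z^τ`. -/
theorem T_system_continuous_in_expectation
    {Ω : Type*} [m : MeasurableSpace Ω] (P : Measure Ω) [IsProbabilityMeasure P]
    (ℱ : Filtration ℝ m) (T : ℝ) (hT : 0 < T)
    (p : ℝ≥0∞) (hp : 1 ≤ p) (hp' : p ≠ ∞)
    (π : (Ω → ℝ → ℝ) →ₗ[ℝ] ℝ)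
    (hπ : ∀ x, IsPlan P ℱ T p x → 0 ≤ π x)
    (hcomp : Compatible P ℱ T p π)
    (τn : ℕ → Ω → ℝ) (τ : Ω → ℝ)
    (hτn : ∀ n, IsBddStoppingTime ℱ T (τn n)) (hτ : IsBddStoppingTime ℱ T τ)
    (hconv : ∀ᵐ ω ∂P, Tendsto (fun n => τn n ω) atTop (nhds (τ ω)))
    (zn : ℕ → Ω → ℝ) (zτ : Ω → ℝ)
    (hznm : ∀ n, Measurable[(hτn n).1.measurableSpace] (zn n))
    (hzn0 : ∀ n, ∀ᵐ ω ∂P, 0 ≤ zn n ω) (hzni : ∀ n, Integrable (zn n) P)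
    (hzm : Measurable[hτ.1.measurableSpace] zτ) (hz0 : ∀ᵐ ω ∂P, 0 ≤ zτ ω)
    (hzi : Integrable zτ P)
    (hrepn : ∀ n, ∀ Z : Ω → ℝ, Measurable[(hτn n).1.measurableSpace] Z →
      (∃ C, ∀ ω, |Z ω| ≤ C) → π (deltaPlan (τn n) Z) = ∫ ω, Z ω * zn n ω ∂P)
    (hrep : ∀ Z : Ω → ℝ, Measurable[hτ.1.measurableSpace] Z →
      (∃ C, ∀ ω, |Z ω| ≤ C) → π (deltaPlan τ Z) = ∫ ω, Z ω * zτ ω ∂P) :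
    Tendsto (fun n => ∫ ω, zn n ω ∂P) atTop (nhds (∫ ω, zτ ω ∂P)) := by
  have hr : 0 < p.toReal := ENNReal.toReal_pos (by intro h; rw [h] at hp; exact absurd hp (by simp)) hp'
  set x : Ω → ℝ → ℝ := deltaPlan τ (fun _ => 1) with hxdef
  set xn : ℕ → Ω → ℝ → ℝ := fun n => deltaPlan (τn n) (fun _ => 1) with hxndef
  have hx : IsPlan P ℱ T p x := isPlan_deltaOne P ℱ p hτ
  have hxn : ∀ n, IsPlan P ℱ T p (xn n) := fun n => isPlan_deltaOne P ℱ p (hτn n)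
  have hτm : Measurable τ := measurable_of_Iic fun t => ℱ.le t _ (by have h := hτ.1 t; simp only [WithTop.coe_le_coe] at h; exact h)
  have hτnm : ∀ n, Measurable (τn n) := fun n =>
    measurable_of_Iic fun t => ℱ.le t _ (by have h := (hτn n).1 t; simp only [WithTop.coe_le_coe] at h; exact h)
  -- the intertemporal norm of `xn n - x` equals `(∫ |τn - τ|)^(1/r)`
  have key : ∀ n, inorm P T p (xn n - x) = (∫ ω, |τn n ω - τ ω| ∂P) ^ (1 / p.toReal) := by
    intro n
    unfold inorm
    congr 1
    refine integral_congr_ae (.of_forall fun ω => ?_)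
    have hT0 : (xn n - x) ω T = 0 := by
      simp [hxndef, hxdef, deltaPlan, ((hτn n).2 ω).2, (hτ.2 ω).2]
    dsimp only
    rw [hT0, abs_zero, Real.zero_rpow hr.ne', add_zero]
    have : ∀ t, (xn n - x) ω t
        = (if τn n ω ≤ t then (1:ℝ) else 0) - (if τ ω ≤ t then 1 else 0) := by
      intro t; simp [hxndef, hxdef, deltaPlan]
    simp_rw [this]
    exact inner_calc ((hτn n).2 ω) (hτ.2 ω) hr
  -- `∫ |τn - τ| → 0` by dominated convergence
  have hint : Tendsto (fun n => ∫ ω, |τn n ω - τ ω| ∂P) atTop (nhds 0) := by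
    have h0 : (0:ℝ) = ∫ _ : Ω, (0:ℝ) ∂P := by simp
    rw [h0]
    apply tendsto_integral_of_dominated_convergence (fun _ => T)
    · exact fun n => (((hτnm n).sub hτm).abs).aestronglyMeasurable
    · exact integrable_const T
    · intro n
      refine .of_forall fun ω => ?_
      rw [Real.norm_eq_abs, abs_abs, abs_sub_le_iff]
      constructor
      · linarith [((hτn n).2 ω).2, (hτ.2 ω).1]
      · linarith [((hτn n).2 ω).1, (hτ.2 ω).2]
    · filter_upwards [hconv] with ω hω
      have := (hω.sub (tendsto_const_nhds (x := τ ω))).abs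
      simpa using this
  have hnorm : Tendsto (fun n => inorm P T p (xn n - x)) atTop (nhds 0) := by
    simp_rw [key]
    have hc : ContinuousAt (fun s : ℝ => s ^ (1 / p.toReal)) 0 :=
      Real.continuousAt_rpow_const 0 _ (Or.inr (by positivity))
    have := hc.tendsto.comp hint
    rw [Real.zero_rpow (by positivity : (1:ℝ)/p.toReal ≠ 0)] at this
    exact this
  have hπt := hcomp x hx xn hxn hnorm
  have e1 : ∀ n, π (xn n) = ∫ ω, zn n ω ∂P := by
    intro n
    have := hrepn n (fun _ => 1) measurable_const ⟨1, fun ω => by norm_num⟩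
    simpa [hxndef] using this
  have e2 : π x = ∫ ω, zτ ω ∂P := by
    have := hrep (fun _ => 1) measurable_const ⟨1, fun ω => by norm_num⟩
    simpa [hxdef] using this
  have : (fun n => π (xn n)) = fun n => ∫ ω, zn n ω ∂P := funext e1
  rwa [this, e2] at hπt

end Equil
end
end

section
/- Let p = 1, let π be a compatible price, and let ψ be a nonnegative, almost surely bounded, adapted process with right-continuous sample paths admitting left limits which is the optional projection of a measurable process ξ with continuous sample paths and E[sup_{t∈[0,T]} |ξ_t|] < ∞, and suppose π(δ_τ h) = E[ψ_τ · h] for every stopping time τ ≤ T and every h ∈ L^1(𝓕_τ, P). Then π(x) = E ∫_{[0,T]} ψ_t dx(t) for every x ∈ E_+ with x_T ∈ L^∞(P). -/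
open MeasureTheory Set Filter
open scoped ENNReal Topology Classical

noncomputable section

namespace Equil

variable {Ω : Type*} [m : MeasurableSpace Ω]

private lemma two_pow_pos (n : ℕ) : (0:ℝ) < 2 ^ n := by positivity

def grid (T : ℝ) (n i : ℕ) : ℝ := (i : ℝ) * T / 2 ^ n
def gfloor (T : ℝ) (n : ℕ) (t : ℝ) : ℝ := (⌊t * 2 ^ n / T⌋ : ℝ) * T / 2 ^ n
def gceil (T : ℝ) (n : ℕ) (t : ℝ) : ℝ := (⌈t * 2 ^ n / T⌉ : ℝ) * T / 2 ^ n
def gpath (f : ℝ → ℝ) (T : ℝ) (n : ℕ) : ℕ → ℝ :=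
  fun i => if i = 0 then 0 else f (grid T n (i - 1))

section Arith
variable {T : ℝ} {n : ℕ}

private lemma scale_le_scale (hT : 0 < T) {a b : ℝ} (h : a ≤ b) :
    a * T / 2 ^ n ≤ b * T / 2 ^ n := by gcongr

private lemma scale_lt_scale (hT : 0 < T) {a b : ℝ} (h : a < b) :
    a * T / 2 ^ n < b * T / 2 ^ n := by gcongr

private lemma unscale (hT : 0 < T) (t : ℝ) : t * 2 ^ n / T * T / 2 ^ n = t := by
  field_simp

private lemma unscale_add (hT : 0 < T) (t : ℝ) :
    (t * 2 ^ n / T + 1) * T / 2 ^ n = t + T / 2 ^ n := by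
  field_simp

private lemma unscale_sub (hT : 0 < T) (t : ℝ) :
    (t * 2 ^ n / T - 1) * T / 2 ^ n = t - T / 2 ^ n := by
  field_simp

lemma grid_mono (hT : 0 < T) : Monotone (grid T n) := fun i j h => by
  apply scale_le_scale hT; exact_mod_cast h

lemma grid_zero : grid T n 0 = 0 := by simp [grid]

lemma grid_last (hT : 0 < T) : grid T n (2 ^ n) = T := by
  rw [grid]; field_simp; norm_num

lemma grid_nonneg (hT : 0 < T) (i : ℕ) : 0 ≤ grid T n i := by
  have := grid_mono (n := n) hT (Nat.zero_le i)
  rwa [grid_zero] at this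

lemma grid_le_T (hT : 0 < T) {i : ℕ} (hi : i ≤ 2 ^ n) : grid T n i ≤ T := by
  have := grid_mono (n := n) hT hi
  rwa [grid_last hT] at this

lemma grid_mem (hT : 0 < T) {i : ℕ} (hi : i ≤ 2 ^ n) : grid T n i ∈ Set.Icc 0 T :=
  ⟨grid_nonneg hT i, grid_le_T hT hi⟩

lemma gfloor_le (hT : 0 < T) (t : ℝ) : gfloor T n t ≤ t := by
  have h := scale_le_scale (n := n) hT (Int.floor_le (t * 2 ^ n / T))
  rwa [unscale hT] at h

lemma lt_gfloor_add (hT : 0 < T) (t : ℝ) : t - T / 2 ^ n < gfloor T n t := by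
  have h := scale_lt_scale (n := n) hT (Int.sub_one_lt_floor (t * 2 ^ n / T))
  rwa [unscale_sub hT] at h

lemma le_gceil (hT : 0 < T) (t : ℝ) : t ≤ gceil T n t := by
  have h := scale_le_scale (n := n) hT (Int.le_ceil (t * 2 ^ n / T))
  rwa [unscale hT] at h

lemma gceil_lt_add (hT : 0 < T) (t : ℝ) : gceil T n t < t + T / 2 ^ n := by
  have h := scale_lt_scale (n := n) hT (Int.ceil_lt_add_one (t * 2 ^ n / T))
  rwa [unscale_add hT] at h

lemma gfloor_grid (hT : 0 < T) (i : ℕ) : gfloor T n (grid T n i) = grid T n i := by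
  rw [gfloor, grid]
  have : (i : ℝ) * T / 2 ^ n * 2 ^ n / T = (i : ℝ) := by field_simp
  rw [this, Int.floor_natCast]; push_cast; ring

lemma gceil_grid (hT : 0 < T) (i : ℕ) : gceil T n (grid T n i) = grid T n i := by
  rw [gceil, grid]
  have : (i : ℝ) * T / 2 ^ n * 2 ^ n / T = (i : ℝ) := by field_simp
  rw [this, Int.ceil_natCast]; push_cast; ring

lemma gfloor_mono (hT : 0 < T) : Monotone (gfloor T n) := fun s t h =>
  scale_le_scale hT (by exact_mod_cast Int.floor_le_floor (by gcongr))

lemma gceil_nonneg (hT : 0 < T) {t : ℝ} (ht : 0 ≤ t) : 0 ≤ gceil T n t :=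
  le_trans ht (le_gceil hT t)

lemma gceil_le_T (hT : 0 < T) {t : ℝ} (ht : t ≤ T) : gceil T n t ≤ T := by
  have h1 : t * 2 ^ n / T ≤ ((2 ^ n : ℕ) : ℤ) := by
    push_cast
    rw [div_le_iff₀ hT]
    nlinarith [two_pow_pos n]
  have h2 : (⌈t * 2 ^ n / T⌉ : ℝ) ≤ ((2 ^ n : ℕ) : ℝ) := by
    exact_mod_cast Int.ceil_le.2 h1
  have := scale_le_scale (n := n) hT h2
  rw [show ((2 ^ n : ℕ) : ℝ) * T / 2 ^ n = T by push_cast; field_simp] at this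
  exact le_trans (le_of_eq rfl) this

lemma gceil_mem (hT : 0 < T) {t : ℝ} (ht : t ∈ Set.Icc 0 T) :
    gceil T n t ∈ Set.Icc 0 T := ⟨gceil_nonneg hT ht.1, gceil_le_T hT ht.2⟩

lemma gceil_T (hT : 0 < T) : gceil T n T = T := by
  have := gceil_grid (n := n) hT (2 ^ n)
  rwa [grid_last hT] at this

lemma gfloor_T (hT : 0 < T) : gfloor T n T = T := by
  have := gfloor_grid (n := n) hT (2 ^ n)
  rwa [grid_last hT] at this

private lemma grid_lt_iff (hT : 0 < T) {i : ℕ} {t : ℝ} :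
    grid T n i < t ↔ (i : ℝ) < t * 2 ^ n / T := by
  rw [grid, div_lt_iff₀ (two_pow_pos n), lt_div_iff₀ hT]

private lemma grid_le_iff (hT : 0 < T) {i : ℕ} {t : ℝ} :
    grid T n i ≤ t ↔ (i : ℝ) ≤ t * 2 ^ n / T := by
  rw [grid, div_le_iff₀ (two_pow_pos n), le_div_iff₀ hT]

private lemma le_grid_iff (hT : 0 < T) {i : ℕ} {t : ℝ} :
    t ≤ grid T n i ↔ t * 2 ^ n / T ≤ (i : ℝ) := by
  rw [grid, le_div_iff₀ (two_pow_pos n), div_le_iff₀ hT]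

private lemma lt_grid_iff (hT : 0 < T) {i : ℕ} {t : ℝ} :
    t < grid T n i ↔ t * 2 ^ n / T < (i : ℝ) := by
  rw [grid, lt_div_iff₀ (two_pow_pos n), div_lt_iff₀ hT]

/-- `gceil` on the half-open grid interval equals the right endpoint. -/
lemma gceil_eq_on_Ioc (hT : 0 < T) {i : ℕ} {t : ℝ}
    (ht : t ∈ Set.Ioc (grid T n i) (grid T n (i + 1))) :
    gceil T n t = grid T n (i + 1) := by
  rw [gceil, grid]
  have hlt : (i : ℝ) < t * 2 ^ n / T := (grid_lt_iff hT).1 ht.1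
  have hle : t * 2 ^ n / T ≤ (i : ℝ) + 1 := by
    have := (le_grid_iff hT).1 ht.2; push_cast at this; linarith
  have hc : ⌈t * 2 ^ n / T⌉ = (i : ℤ) + 1 := by
    apply Int.ceil_eq_iff.2
    constructor
    · push_cast; linarith
    · push_cast; linarith
  rw [hc]; push_cast; ring

/-- `gfloor` on half-open grid interval `[g i, g (i+1))` equals left endpoint. -/
lemma gfloor_eq_on_Ico (hT : 0 < T) {i : ℕ} {t : ℝ}
    (ht : t ∈ Set.Ico (grid T n i) (grid T n (i + 1))) :
    gfloor T n t = grid T n i := by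
  rw [gfloor, grid]
  have hle : (i : ℝ) ≤ t * 2 ^ n / T := (grid_le_iff hT).1 ht.1
  have hlt : t * 2 ^ n / T < (i : ℝ) + 1 := by
    have := (lt_grid_iff hT).1 ht.2; push_cast at this; linarith
  have hf : ⌊t * 2 ^ n / T⌋ = (i : ℤ) := by
    apply Int.floor_eq_iff.2
    constructor
    · push_cast; exact hle
    · push_cast; exact hlt
  rw [hf]; push_cast; ring

lemma tendsto_div_two_pow (c : ℝ) :
    Tendsto (fun n : ℕ => c / 2 ^ n) atTop (nhds 0) := by
  have : (fun n : ℕ => c / 2 ^ n) = fun n : ℕ => c * (1 / 2 : ℝ) ^ n := by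
    funext n; rw [div_pow, one_pow]; ring
  rw [this]
  have h := tendsto_pow_atTop_nhds_zero_of_lt_one (r := (1/2 : ℝ)) (by norm_num) (by norm_num)
  simpa using h.const_mul c

lemma tendsto_gceil (hT : 0 < T) (t : ℝ) :
    Tendsto (fun n => gceil T n t) atTop (nhdsWithin t (Set.Ici t)) := by
  apply tendsto_nhdsWithin_of_tendsto_nhds_of_eventually_within
  · apply tendsto_of_tendsto_of_tendsto_of_le_of_le (g := fun _ => t)
      (h := fun n : ℕ => t + T / 2 ^ n)
    · exact tendsto_const_nhds
    · simpa using (tendsto_div_two_pow T).const_add t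
    · exact fun n => le_gceil hT t
    · exact fun n => (gceil_lt_add hT t).le
  · exact Filter.Eventually.of_forall fun n => le_gceil hT t

lemma tendsto_gfloor (hT : 0 < T) (t : ℝ) :
    Tendsto (fun n => gfloor T n t) atTop (nhds t) := by
  apply tendsto_of_tendsto_of_tendsto_of_le_of_le (g := fun n : ℕ => t - T / 2 ^ n)
    (h := fun _ => t)
  · simpa using (tendsto_div_two_pow T).const_sub t
  · exact tendsto_const_nhds
  · exact fun n => (lt_gfloor_add hT t).le
  · exact fun n => gfloor_le hT t

end Arith

section Path
variable {T : ℝ} {f : ℝ → ℝ}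

lemma path_nonneg (hmono : Monotone f) (hzero : ∀ t < 0, f t = 0) (t : ℝ) :
    0 ≤ f t := by
  rcases lt_or_ge t 0 with h | h
  · rw [hzero t h]
  · rw [← hzero (-1) (by norm_num)]; exact hmono (by linarith)

lemma path_le (hmono : Monotone f) (hconst : ∀ t, T ≤ t → f t = f T) (t : ℝ) :
    f t ≤ f T := by
  rcases le_or_gt t T with h | h
  · exact hmono h
  · rw [hconst t h.le]

lemma path_leftLim_zero (hzero : ∀ t < 0, f t = 0) : Function.leftLim f 0 = 0 := by
  apply leftLim_eq_of_tendsto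
  apply Tendsto.congr' _ (tendsto_const_nhds (x := (0:ℝ)))
  exact eventually_nhdsWithin_of_forall fun t ht => (hzero t ht).symm

lemma pathMeasure_eq (hmono : Monotone f)
    (hrc : ∀ t, ContinuousWithinAt f (Set.Ici t) t) :
    pathMeasure f = StieltjesFunction.measure ⟨f, hmono, hrc⟩ := dif_pos ⟨hmono, hrc⟩

lemma pathMeasure_Ioc (hmono : Monotone f)
    (hrc : ∀ t, ContinuousWithinAt f (Set.Ici t) t) (a b : ℝ) :
    pathMeasure f (Set.Ioc a b) = ENNReal.ofReal (f b - f a) := by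
  rw [pathMeasure_eq hmono hrc, StieltjesFunction.measure_Ioc]

lemma pathMeasure_zero_singleton (hmono : Monotone f)
    (hrc : ∀ t, ContinuousWithinAt f (Set.Ici t) t) (hzero : ∀ t < 0, f t = 0) :
    pathMeasure f {0} = ENNReal.ofReal (f 0) := by
  rw [pathMeasure_eq hmono hrc, StieltjesFunction.measure_singleton]
  show ENNReal.ofReal (f 0 - Function.leftLim f 0) = ENNReal.ofReal (f 0)
  rw [path_leftLim_zero hzero, sub_zero]

lemma pathMeasure_Icc_lt_top (hT : 0 < T) (hmono : Monotone f)
    (hrc : ∀ t, ContinuousWithinAt f (Set.Ici t) t) :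
    pathMeasure f (Set.Icc 0 T) < ⊤ := by
  have hsub : Set.Icc (0:ℝ) T ⊆ Set.Ioc (-1) T := fun t ht => ⟨by linarith [ht.1], ht.2⟩
  calc pathMeasure f (Set.Icc 0 T) ≤ pathMeasure f (Set.Ioc (-1) T) := measure_mono hsub
    _ = ENNReal.ofReal (f T - f (-1)) := pathMeasure_Ioc hmono hrc _ _
    _ < ⊤ := ENNReal.ofReal_lt_top

/-- the `i`-th cell of the partition of `Icc 0 T`: `{0}` for `i = 0`,
`Ioc (grid (i-1)) (grid i)` else. -/
def cell (T : ℝ) (n i : ℕ) : Set ℝ :=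
  if i = 0 then {0} else Set.Ioc (grid T n (i - 1)) (grid T n i)

lemma cell_measurableSet (i : ℕ) : MeasurableSet (cell T n i) := by
  rw [cell]; split
  · exact measurableSet_singleton 0
  · exact measurableSet_Ioc

lemma cell_disjoint (hT : 0 < T) {n : ℕ} :
    (↑(Finset.range (2 ^ n + 1)) : Set ℕ).Pairwise (Function.onFun Disjoint (cell T n)) := by
  have key : ∀ i j : ℕ, i < j → Disjoint (cell T n i) (cell T n j) := by
    intro i j hij
    have hj : j ≠ 0 := by omega
    rw [cell, cell, if_neg hj]
    split
    · rw [Set.disjoint_singleton_left]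
      intro hmem
      exact absurd hmem.1 (not_lt.2 (grid_nonneg hT _))
    · rw [Set.Ioc_disjoint_Ioc]
      refine le_trans (min_le_left _ _) (le_trans ?_ (le_max_right _ _))
      exact grid_mono hT (by omega)
  intro i _ j _ hij
  rcases lt_or_gt_of_ne hij with h | h
  · exact key i j h
  · exact (key j i h).symm

lemma cell_union (hT : 0 < T) {n : ℕ} :
    (⋃ i ∈ Finset.range (2 ^ n + 1), cell T n i) = Set.Icc 0 T := by
  apply Set.Subset.antisymm
  · refine Set.iUnion₂_subset fun i hi => ?_
    rw [Finset.mem_range] at hi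
    rw [cell]; split
    · exact Set.singleton_subset_iff.2 ⟨le_refl 0, hT.le⟩
    · intro t ht
      have hile : i ≤ 2 ^ n := Nat.lt_succ_iff.mp hi
      exact ⟨le_trans (grid_nonneg hT _) ht.1.le, le_trans ht.2 (grid_le_T hT hile)⟩
  · intro t ht
    rcases eq_or_lt_of_le ht.1 with h0 | h0
    · refine Set.mem_biUnion (Finset.mem_range.2 (Nat.succ_pos _)) ?_
      rw [cell, if_pos rfl]; exact Set.mem_singleton_iff.2 h0.symm
    · -- t ∈ Ioc 0 T
      set u := t * 2 ^ n / T with hu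
      have hu0 : 0 < u := by
        apply div_pos (by positivity) hT
      set k := (⌈u⌉).toNat with hk
      have hkpos : 1 ≤ k := by
        have : 0 < ⌈u⌉ := Int.ceil_pos.2 hu0
        omega
      have hceilnn : (0:ℤ) ≤ ⌈u⌉ := le_of_lt (Int.ceil_pos.2 hu0)
      have hkc : ((k : ℕ) : ℝ) = (⌈u⌉ : ℝ) := by
        exact_mod_cast congrArg (fun z : ℤ => (z : ℝ)) (Int.toNat_of_nonneg hceilnn)
      have hkle : k ≤ 2 ^ n := by
        have h1 : u ≤ ((2 ^ n : ℕ) : ℝ) :=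
          (le_grid_iff (n := n) (i := 2 ^ n) hT).1 (by rw [grid_last hT]; exact ht.2)
        have h2 : ⌈u⌉ ≤ ((2 ^ n : ℕ) : ℤ) := Int.ceil_le.2 (by exact_mod_cast h1)
        exact Int.toNat_le.2 h2
      refine Set.mem_biUnion (Finset.mem_range.2 (Nat.lt_succ_of_le hkle)) ?_
      rw [cell, if_neg (by omega)]
      constructor
      · -- grid (k-1) < t
        rw [grid_lt_iff hT]
        have hc : ((k - 1 : ℕ) : ℝ) = (⌈u⌉ : ℝ) - 1 := by
          rw [Nat.cast_sub hkpos, hkc]; norm_num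
        rw [hc]
        have := Int.ceil_lt_add_one u
        linarith
      · -- t ≤ grid k
        rw [le_grid_iff hT, hkc]
        exact Int.le_ceil u

lemma cell_measure_lt_top (hT : 0 < T) (hmono : Monotone f)
    (hrc : ∀ t, ContinuousWithinAt f (Set.Ici t) t) (hzero : ∀ t < 0, f t = 0)
    (n i : ℕ) : pathMeasure f (cell T n i) < ⊤ := by
  rw [cell]; split
  · rw [pathMeasure_zero_singleton hmono hrc hzero]; exact ENNReal.ofReal_lt_top
  · rw [pathMeasure_Ioc hmono hrc]; exact ENNReal.ofReal_lt_top

lemma measurable_comp_gceil {n : ℕ} (ψω : ℝ → ℝ) :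
    Measurable fun t => ψω (gceil T n t) := by
  have : (fun t => ψω (gceil T n t)) =
      (fun k : ℤ => ψω ((k : ℝ) * T / 2 ^ n)) ∘ fun t => ⌈t * 2 ^ n / T⌉ := rfl
  rw [this]
  exact measurable_from_top.comp
    (Int.measurable_ceil.comp ((measurable_id.mul_const _).div_const _))

lemma measurable_comp_gfloor {n : ℕ} (ψω : ℝ → ℝ) :
    Measurable fun t => ψω (gfloor T n t) := by
  have : (fun t => ψω (gfloor T n t)) =
      (fun k : ℤ => ψω ((k : ℝ) * T / 2 ^ n)) ∘ fun t => ⌊t * 2 ^ n / T⌋ := rfl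
  rw [this]
  exact measurable_from_top.comp
    (Int.measurable_floor.comp ((measurable_id.mul_const _).div_const _))

end Path

section PathInt
variable {T : ℝ} {f : ℝ → ℝ}

/-- Riemann–Stieltjes sum identity: the integral of `ψω ∘ gceil` against the
path measure over `[0,T]` equals the grid sum. -/
lemma integral_gceil_eq_sum (hT : 0 < T) (hmono : Monotone f)
    (hrc : ∀ t, ContinuousWithinAt f (Set.Ici t) t) (hzero : ∀ t < 0, f t = 0)
    (ψω : ℝ → ℝ) (n : ℕ) :
    ∫ t in Set.Icc 0 T, ψω (gceil T n t) ∂(pathMeasure f)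
      = ∑ i ∈ Finset.range (2 ^ n + 1),
          ψω (grid T n i) * (gpath f T n (i + 1) - gpath f T n i) := by
  have hcong : ∀ i : ℕ, Set.EqOn (fun t => ψω (gceil T n t)) (fun _ => ψω (grid T n i))
      (cell T n i) := by
    intro i t ht
    rw [cell] at ht
    by_cases hi : i = 0
    · rw [if_pos hi] at ht
      rw [Set.mem_singleton_iff] at ht
      subst ht
      simp only [hi]
      rw [show gceil T n 0 = grid T n 0 by
        rw [← grid_zero (T := T) (n := n)]
        exact gceil_grid hT 0]
    · rw [if_neg hi] at ht
      obtain ⟨j, rfl⟩ : ∃ j, i = j + 1 := ⟨i - 1, by omega⟩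
      simp only [Nat.add_sub_cancel] at ht
      exact congrArg ψω (gceil_eq_on_Ioc hT ht)
  have hint : ∀ i ∈ Finset.range (2 ^ n + 1),
      IntegrableOn (fun t => ψω (gceil T n t)) (cell T n i) (pathMeasure f) := by
    intro i _
    have hcst : IntegrableOn (fun _ => ψω (grid T n i)) (cell T n i) (pathMeasure f) :=
      integrableOn_const (cell_measure_lt_top hT hmono hrc hzero n i).ne
    exact hcst.congr_fun (hcong i).symm (cell_measurableSet i)
  rw [← cell_union (n := n) hT, integral_biUnion_finset _
      (fun i _ => cell_measurableSet i) (cell_disjoint hT) hint]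
  apply Finset.sum_congr rfl
  intro i _
  rw [setIntegral_congr_fun (cell_measurableSet i) (hcong i), setIntegral_const]
  rw [smul_eq_mul, mul_comm]
  congr 1
  by_cases hi : i = 0
  · subst hi
    rw [cell, if_pos rfl, measureReal_def, pathMeasure_zero_singleton hmono hrc hzero,
      ENNReal.toReal_ofReal (path_nonneg hmono hzero 0)]
    rw [gpath, gpath, if_neg (by omega), if_pos rfl]
    simp [grid_zero]
  · rw [cell, if_neg hi, measureReal_def, pathMeasure_Ioc hmono hrc,
      ENNReal.toReal_ofReal (sub_nonneg.2 (hmono (grid_mono hT (by omega))))]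
    rw [gpath, gpath, if_neg (by omega), if_neg hi]
    simp only [Nat.add_sub_cancel]

/-- Convergence of the grid integrals to `∫ ψω` by right-continuity. -/
lemma tendsto_integral_gceil (hT : 0 < T) (hmono : Monotone f)
    (hrc : ∀ t, ContinuousWithinAt f (Set.Ici t) t) (hzero : ∀ t < 0, f t = 0)
    {ψω : ℝ → ℝ} {C : ℝ}
    (hψrc : ∀ t ∈ Set.Ico (0:ℝ) T, ContinuousWithinAt ψω (Set.Ici t) t)
    (hψb : ∀ t ∈ Set.Icc (0:ℝ) T, |ψω t| ≤ C) :
    Tendsto (fun n => ∫ t in Set.Icc 0 T, ψω (gceil T n t) ∂(pathMeasure f)) atTop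
      (nhds (∫ t in Set.Icc 0 T, ψω t ∂(pathMeasure f))) := by
  apply tendsto_integral_of_dominated_convergence (fun _ => C)
  · exact fun n => ((measurable_comp_gceil ψω).aestronglyMeasurable)
  · exact integrableOn_const (pathMeasure_Icc_lt_top hT hmono hrc).ne
  · intro n
    filter_upwards [ae_restrict_mem measurableSet_Icc] with t ht
    rw [Real.norm_eq_abs]
    exact hψb _ (gceil_mem hT ht)
  · filter_upwards [ae_restrict_mem measurableSet_Icc] with t ht
    rcases eq_or_lt_of_le ht.2 with hT' | hT'
    · subst hT'
      have : ∀ n, ψω (gceil t n t) = ψω t := fun n => by rw [gceil_T hT]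
      simpa [this] using tendsto_const_nhds
    · exact (hψrc t ⟨ht.1, hT'⟩).tendsto.comp (tendsto_gceil hT t)
end PathInt

section GfloorInt
variable {T : ℝ} {f : ℝ → ℝ}

private lemma Ico_biUnion (hT : 0 < T) (n : ℕ) :
    (⋃ i ∈ Finset.range (2 ^ n), Set.Ico (grid T n i) (grid T n (i + 1)))
      = Set.Ico (0:ℝ) T := by
  have key : ∀ m : ℕ, (⋃ i ∈ Finset.range m, Set.Ico (grid T n i) (grid T n (i + 1)))
      = Set.Ico (grid T n 0) (grid T n m) := by
    intro m
    induction m with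
    | zero => simp
    | succ k ih =>
      rw [Finset.range_add_one, Finset.set_biUnion_insert, ih, Set.union_comm,
        Set.Ico_union_Ico_eq_Ico (grid_mono hT (Nat.zero_le k)) (grid_mono hT (Nat.le_succ k))]
  rw [key (2 ^ n), grid_zero, grid_last hT]

private lemma grid_diff (hT : 0 < T) (n i : ℕ) :
    grid T n (i + 1) - grid T n i = T / 2 ^ n := by
  rw [grid, grid]; push_cast; field_simp; ring

/-- The key quantitative bound for the intertemporal-norm convergence. -/
lemma integral_gfloor_diff_le (hT : 0 < T) (hmono : Monotone f)
    (hzero : ∀ t < 0, f t = 0) (hconst : ∀ t, T ≤ t → f t = f T) (n : ℕ) :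
    ∫ t in Set.Icc (0:ℝ) T, (f t - f (gfloor T n t)) ≤ T / 2 ^ n * f T := by
  have hfm : Measurable f := hmono.measurable
  have hgm : Measurable fun t => f t - f (gfloor T n t) :=
    hfm.sub (measurable_comp_gfloor f)
  have hbd : ∀ t, |f t - f (gfloor T n t)| ≤ f T := by
    intro t
    rw [abs_of_nonneg (sub_nonneg.2 (hmono (gfloor_le hT t)))]
    have h1 := path_nonneg hmono hzero (gfloor T n t)
    have h2 := path_le hmono hconst t
    linarith
  have hintOn : ∀ s : Set ℝ, s ⊆ Set.Icc (0:ℝ) T →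
      IntegrableOn (fun t => f t - f (gfloor T n t)) s volume := by
    intro s hs
    apply IntegrableOn.mono_set _ hs
    apply Integrable.mono' (g := fun _ => f T)
      (integrableOn_const (by rw [Real.volume_Icc]; exact ENNReal.ofReal_lt_top.ne))
      hgm.aestronglyMeasurable
    exact Filter.Eventually.of_forall fun t => by rw [Real.norm_eq_abs]; exact hbd t
  have hIccIco : ∫ t in Set.Icc (0:ℝ) T, (f t - f (gfloor T n t))
      = ∫ t in Set.Ico (0:ℝ) T, (f t - f (gfloor T n t)) :=
    (setIntegral_congr_set MeasureTheory.Ico_ae_eq_Icc).symm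
  rw [hIccIco, ← Ico_biUnion hT n]
  have hdisj : (↑(Finset.range (2 ^ n)) : Set ℕ).Pairwise
      (Function.onFun Disjoint fun i => Set.Ico (grid T n i) (grid T n (i + 1))) := by
    have key : ∀ i j : ℕ, i < j →
        Disjoint (Set.Ico (grid T n i) (grid T n (i + 1)))
          (Set.Ico (grid T n j) (grid T n (j + 1))) := by
      intro i j hij
      rw [Set.Ico_disjoint_Ico]
      refine le_trans (min_le_left _ _) (le_trans ?_ (le_max_right _ _))
      exact grid_mono hT (by omega)
    intro i _ j _ hij
    rcases lt_or_gt_of_ne hij with h | h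
    · exact key i j h
    · exact (key j i h).symm
  have hsub : ∀ i ∈ Finset.range (2 ^ n),
      Set.Ico (grid T n i) (grid T n (i + 1)) ⊆ Set.Icc (0:ℝ) T := by
    intro i hi t ht
    rw [Finset.mem_range] at hi
    exact ⟨le_trans (grid_nonneg hT i) ht.1, le_trans ht.2.le (grid_le_T hT (by omega))⟩
  rw [integral_biUnion_finset _ (fun i _ => measurableSet_Ico) hdisj
    (fun i hi => hintOn _ (hsub i hi))]
  have hterm : ∀ i ∈ Finset.range (2 ^ n),
      ∫ t in Set.Ico (grid T n i) (grid T n (i + 1)), (f t - f (gfloor T n t))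
        ≤ (f (grid T n (i + 1)) - f (grid T n i)) * (T / 2 ^ n) := by
    intro i hi
    have hle : ∀ t ∈ Set.Ico (grid T n i) (grid T n (i + 1)),
        f t - f (gfloor T n t) ≤ f (grid T n (i + 1)) - f (grid T n i) := by
      intro t ht
      rw [gfloor_eq_on_Ico hT ht]
      have := hmono ht.2.le
      linarith
    calc ∫ t in Set.Ico (grid T n i) (grid T n (i + 1)), (f t - f (gfloor T n t))
        ≤ ∫ _ in Set.Ico (grid T n i) (grid T n (i + 1)),
            (f (grid T n (i + 1)) - f (grid T n i)) := by
          apply setIntegral_mono_on (hintOn _ (hsub i hi))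
            (integrableOn_const (by rw [Real.volume_Ico]; exact ENNReal.ofReal_lt_top.ne))
            measurableSet_Ico hle
      _ = (f (grid T n (i + 1)) - f (grid T n i)) * (T / 2 ^ n) := by
          rw [setIntegral_const, smul_eq_mul, measureReal_def, Real.volume_Ico, grid_diff hT,
            ENNReal.toReal_ofReal (by positivity), mul_comm]
  calc ∑ i ∈ Finset.range (2 ^ n), ∫ t in Set.Ico (grid T n i) (grid T n (i + 1)),
          (f t - f (gfloor T n t))
      ≤ ∑ i ∈ Finset.range (2 ^ n), (f (grid T n (i + 1)) - f (grid T n i)) * (T / 2 ^ n) :=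
        Finset.sum_le_sum hterm
    _ = (f (grid T n (2 ^ n)) - f (grid T n 0)) * (T / 2 ^ n) := by
        rw [← Finset.sum_mul, Finset.sum_range_sub (fun i => f (grid T n i))]
    _ ≤ T / 2 ^ n * f T := by
        rw [grid_zero, grid_last hT]
        have h0 : 0 ≤ f 0 := path_nonneg hmono hzero 0
        have : 0 < T / 2 ^ n := by positivity
        nlinarith
end GfloorInt

section Telescope
variable {T : ℝ} {f : ℝ → ℝ}

lemma sum_gpath (hT : 0 < T) (n : ℕ) :
    ∑ i ∈ Finset.range (2 ^ n + 1), (gpath f T n (i + 1) - gpath f T n i) = f T := by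
  rw [Finset.sum_range_sub (gpath f T n)]
  rw [gpath, gpath, if_neg (Nat.succ_ne_zero _), if_pos rfl, sub_zero, Nat.add_sub_cancel,
    grid_last hT]

lemma gfloor_eq_sum (hT : 0 < T) (hmono : Monotone f) (hzero : ∀ t < 0, f t = 0)
    (hconst : ∀ t, T ≤ t → f t = f T) (n : ℕ) (t : ℝ) :
    f (gfloor T n t) = ∑ i ∈ Finset.range (2 ^ n + 1),
      (if grid T n i ≤ t then gpath f T n (i + 1) - gpath f T n i else 0) := by
  rcases lt_or_ge t 0 with ht | ht
  · rw [hzero _ (lt_of_le_of_lt (gfloor_le hT t) ht)]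
    rw [Finset.sum_eq_zero]
    intro i _
    rw [if_neg (not_le.2 (lt_of_lt_of_le ht (grid_nonneg hT i)))]
  · set u := t * 2 ^ n / T with hu
    have hu0 : 0 ≤ u := by positivity
    have hfl0 : (0:ℤ) ≤ ⌊u⌋ := Int.floor_nonneg.2 hu0
    set K := min (⌊u⌋.toNat) (2 ^ n) with hK
    have hKle : K ≤ 2 ^ n := min_le_right _ _
    have hmem : ∀ i, i ≤ 2 ^ n → (grid T n i ≤ t ↔ i ≤ K) := by
      intro i hi
      rw [grid_le_iff hT, ← hu]
      constructor
      · intro h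
        have : (i : ℤ) ≤ ⌊u⌋ := Int.le_floor.2 (by exact_mod_cast h)
        have : i ≤ ⌊u⌋.toNat := by omega
        exact le_min this hi
      · intro h
        have h1 : i ≤ ⌊u⌋.toNat := le_trans h (min_le_left _ _)
        have h2 : (i : ℤ) ≤ ⌊u⌋ := by omega
        have h3 : (i : ℝ) ≤ (⌊u⌋ : ℝ) := by exact_mod_cast h2
        exact le_trans h3 (Int.floor_le u)
    have hval : f (gfloor T n t) = f (grid T n K) := by
      rcases le_or_gt (⌊u⌋.toNat) (2 ^ n) with hc | hc
      · have hKeq : K = ⌊u⌋.toNat := min_eq_left hc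
        rw [gfloor, grid, hKeq, ← hu,
          show ((⌊u⌋.toNat : ℕ) : ℝ) = (⌊u⌋ : ℝ) by exact_mod_cast Int.toNat_of_nonneg hfl0]
      · have hKeq : K = 2 ^ n := min_eq_right hc.le
        rw [hKeq, grid_last hT]
        apply hconst
        have h1 : ((2 ^ n : ℕ) : ℝ) ≤ (⌊u⌋ : ℝ) := by
          have : ((2 ^ n : ℕ) : ℤ) ≤ ⌊u⌋ := by omega
          exact_mod_cast this
        have := scale_le_scale (n := n) hT h1
        rw [show ((2 ^ n : ℕ) : ℝ) * T / 2 ^ n = T by push_cast; field_simp] at this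
        exact this
    rw [hval]
    rw [Finset.sum_congr rfl (fun i hi =>
      if_congr (hmem i (Nat.lt_succ_iff.mp (Finset.mem_range.mp hi))) rfl rfl)]
    · rw [← Finset.sum_subset (Finset.range_subset_range.2 (Nat.succ_le_succ hKle))
        (fun i _ hni => if_neg (by rw [Finset.mem_range] at hni; omega))]
      rw [Finset.sum_congr rfl (fun i hi => if_pos (by
        rw [Finset.mem_range] at hi; omega))]
      rw [Finset.sum_range_sub (gpath f T n)]
      rw [gpath, gpath, if_neg (Nat.succ_ne_zero _), if_pos rfl, sub_zero]
      congr 1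
end Telescope


/-- for `p = 1`, a compatible price represented at all stopping times by a
nonnegative bounded adapted cadlag process `ψ` (the optional projection of a continuous
process with integrable running supremum) satisfies `π(x) = E ∫ ψ dx` on all bounded
consumption plans. -/
theorem price_eq_pairing_on_bounded_plans
    {Ω : Type*} [m : MeasurableSpace Ω] (P : Measure Ω) [IsProbabilityMeasure P]
    (ℱ : Filtration ℝ m) (T : ℝ) (hT : 0 < T)
    (π : (Ω → ℝ → ℝ) →ₗ[ℝ] ℝ)
    (hπ : ∀ x, IsPlan P ℱ T 1 x → 0 ≤ π x)
    (hcomp : Compatible P ℱ T 1 π)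
    (ψ : Ω → ℝ → ℝ) (hpos : ∀ ω t, 0 ≤ ψ ω t)
    (hadapted : ∀ t, Measurable[ℱ t] fun ω => ψ ω t)
    (hcad : ∀ ω, CadlagOn T (ψ ω))
    (C : ℝ) (hbdd : ∀ᵐ ω ∂P, ∀ t ∈ Set.Icc (0 : ℝ) T, ψ ω t ≤ C)
    (ξ : Ω → ℝ → ℝ) (hξmeas : Measurable (Function.uncurry ξ))
    (hξcont : ∀ ω, ContinuousOn (ξ ω) (Set.Icc 0 T))
    (hξint : Integrable (fun ω => supOn T fun t => |ξ ω t|) P)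
    (hproj : IsOptionalProjection P ℱ T ψ ξ)
    (hrep : ∀ τ (hτ : IsBddStoppingTime ℱ T τ), ∀ h : Ω → ℝ,
      Measurable[hτ.1.measurableSpace] h → Integrable h P →
      π (deltaPlan τ h) = ∫ ω, ψ ω (τ ω) * h ω ∂P) :
    ∀ x, IsPlan P ℱ T 1 x → (∃ B : ℝ, ∀ᵐ ω ∂P, x ω T ≤ B) →
      π x = pairPlan P T ψ x := by
  intro x hx _hB
  have hxmono := hx.mono
  have hxrc := hx.right_cont
  have hxzero := hx.zero_neg
  have hxconst := hx.const_ge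
  have hxTint : Integrable (fun ω => x ω T) P := memLp_one_iff_integrable.mp hx.memLp
  have hxmeas : ∀ s : ℝ, Measurable fun ω => x ω s :=
    fun s => (hx.adapted s).mono (ℱ.le s) le_rfl
  have hx0le : ∀ ω t, 0 ≤ x ω t := fun ω => path_nonneg (hxmono ω) (hxzero ω)
  have hxleT : ∀ ω t, x ω t ≤ x ω T := fun ω => path_le (hxmono ω) (hxconst ω)
  have hψmeas : ∀ s : ℝ, Measurable fun ω => ψ ω s :=
    fun s => (hadapted s).mono (ℱ.le s) le_rfl
  have hxint : ∀ s : ℝ, Integrable (fun ω => x ω s) P :=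
    fun s => hxTint.mono' (hxmeas s).aestronglyMeasurable
      (Filter.Eventually.of_forall fun ω => by
        rw [Real.norm_eq_abs, abs_of_nonneg (hx0le ω s)]; exact hxleT ω s)
  -- the discretized plans and their increments
  set d : ℕ → ℕ → Ω → ℝ :=
    fun n i ω => gpath (x ω) T n (i + 1) - gpath (x ω) T n i with hd
  set xn : ℕ → Ω → ℝ → ℝ := fun n ω t => x ω (gfloor T n t) with hxn
  have hgpmeas : ∀ n j, Measurable fun ω => gpath (x ω) T n j := by
    intro n j
    by_cases hj : j = 0
    · simpa [gpath, hj] using measurable_const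
    · simpa [gpath, hj] using hxmeas (grid T n (j - 1))
  have hgpint : ∀ n j, Integrable (fun ω => gpath (x ω) T n j) P := by
    intro n j
    by_cases hj : j = 0
    · simpa [gpath, hj] using integrable_const (0 : ℝ)
    · simpa [gpath, hj] using hxint (grid T n (j - 1))
  have hdmeas : ∀ n i, Measurable (d n i) := fun n i =>
    (hgpmeas n (i + 1)).sub (hgpmeas n i)
  have hdint : ∀ n i, Integrable (d n i) P := fun n i =>
    (hgpint n (i + 1)).sub (hgpint n i)
  have hdnn : ∀ n i ω, 0 ≤ d n i ω := by
    intro n i ω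
    rw [hd]
    by_cases hi : i = 0
    · simp only [hi, gpath]
      norm_num
      exact hx0le ω _
    · simp only [gpath, if_neg hi, if_neg (Nat.succ_ne_zero i), sub_nonneg,
        Nat.add_sub_cancel]
      exact hxmono ω (grid_mono hT (by omega))
  have hsum_d : ∀ n ω, ∑ i ∈ Finset.range (2 ^ n + 1), d n i ω = x ω T :=
    fun n ω => sum_gpath hT n
  -- each discretization is a plan
  have hplan : ∀ n, IsPlan P ℱ T 1 (xn n) := by
    intro n
    constructor
    · intro ω a b hab
      exact hxmono ω (gfloor_mono hT hab)
    · intro ω t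
      simp only [hxn]
      have hlt : t < (⌊t * 2 ^ n / T⌋ + 1 : ℝ) * T / 2 ^ n := by
        have h := scale_lt_scale (n := n) hT (Int.lt_floor_add_one (t * 2 ^ n / T))
        rw [unscale hT] at h
        exact_mod_cast h
      have hmem : Set.Ico t ((⌊t * 2 ^ n / T⌋ + 1 : ℝ) * T / 2 ^ n)
          ∈ nhdsWithin t (Set.Ici t) :=
        Ico_mem_nhdsGE_of_mem ⟨le_rfl, hlt⟩
      have heq : (fun s => x ω (gfloor T n s)) =ᶠ[nhdsWithin t (Set.Ici t)]
          (fun _ => x ω (gfloor T n t)) := by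
        apply Filter.eventuallyEq_of_mem hmem
        intro s hs
        have hfl : ⌊s * 2 ^ n / T⌋ = ⌊t * 2 ^ n / T⌋ := by
          apply Int.floor_eq_iff.2
          constructor
          · calc ((⌊t * 2 ^ n / T⌋ : ℤ) : ℝ) ≤ t * 2 ^ n / T := Int.floor_le _
              _ ≤ s * 2 ^ n / T := by gcongr; exact hs.1
          · have h2 : s * 2 ^ n / T < ((⌊t * 2 ^ n / T⌋ + 1 : ℝ) * T / 2 ^ n) * 2 ^ n / T := by
              gcongr; exact hs.2
            rwa [show ((⌊t * 2 ^ n / T⌋ + 1 : ℝ) * T / 2 ^ n) * 2 ^ n / T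
              = (⌊t * 2 ^ n / T⌋ : ℝ) + 1 by field_simp] at h2
        simp only [gfloor, hfl]
      exact ContinuousWithinAt.congr_of_eventuallyEq continuousWithinAt_const heq rfl
    · intro ω t ht
      exact hxzero ω _ (lt_of_le_of_lt (gfloor_le hT t) ht)
    · intro ω t hTt
      simp only [hxn]
      rw [gfloor_T hT]
      apply hxconst
      have h1 : ((2 ^ n : ℕ) : ℝ) ≤ t * 2 ^ n / T := by
        rw [le_div_iff₀ hT]
        push_cast
        nlinarith [two_pow_pos n]
      have h2 : ((2 ^ n : ℕ) : ℝ) ≤ (⌊t * 2 ^ n / T⌋ : ℝ) := by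
        exact_mod_cast Int.le_floor.2 (by exact_mod_cast h1)
      have h3 := scale_le_scale (n := n) hT h2
      rw [show ((2 ^ n : ℕ) : ℝ) * T / 2 ^ n = T by push_cast; field_simp] at h3
      exact h3
    · intro t
      exact (hx.adapted (gfloor T n t)).mono (ℱ.mono (gfloor_le hT t)) le_rfl
    · have : (fun ω => xn n ω T) = fun ω => x ω T := by
        funext ω; simp only [hxn, gfloor_T hT]
      rw [this]
      exact hx.memLp
  -- representation as sums of delta plans
  have hrepn : ∀ n, xn n = ∑ i ∈ Finset.range (2 ^ n + 1),
      deltaPlan (fun _ => grid T n i) (d n i) := by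
    intro n
    funext ω t
    rw [show (∑ i ∈ Finset.range (2 ^ n + 1),
        deltaPlan (fun _ => grid T n i) (d n i)) ω t
      = ∑ i ∈ Finset.range (2 ^ n + 1),
          (if grid T n i ≤ t then d n i ω else 0) by
        rw [Finset.sum_apply, Finset.sum_apply]
        exact Finset.sum_congr rfl fun i _ => rfl]
    exact gfloor_eq_sum hT (hxmono ω) (hxzero ω) (hxconst ω) n t
  -- the Riemann–Stieltjes sums
  set S : ℕ → Ω → ℝ :=
    fun n ω => ∑ i ∈ Finset.range (2 ^ n + 1), ψ ω (grid T n i) * d n i ω with hS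
  have hSmeas : ∀ n, Measurable (S n) := by
    intro n
    apply Finset.measurable_sum
    intro i _
    exact (hψmeas (grid T n i)).mul (hdmeas n i)
  have hπn : ∀ n, π (xn n) = ∫ ω, S n ω ∂P := by
    intro n
    rw [hrepn n, map_sum]
    have hterm : ∀ i ∈ Finset.range (2 ^ n + 1),
        π (deltaPlan (fun _ => grid T n i) (d n i))
          = ∫ ω, ψ ω (grid T n i) * d n i ω ∂P := by
      intro i hi
      have hi' : i ≤ 2 ^ n := Nat.lt_succ_iff.mp (Finset.mem_range.mp hi)
      have hst : IsBddStoppingTime ℱ T (fun _ => grid T n i) :=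
        ⟨isStoppingTime_const ℱ _, fun _ => grid_mem hT hi'⟩
      have hmeq : hst.1.measurableSpace = ℱ (grid T n i) :=
        IsStoppingTime.measurableSpace_const ℱ (grid T n i)
      have hdst : Measurable[hst.1.measurableSpace] (d n i) := by
        rw [hmeq, hd]
        apply Measurable.sub
        · have : (fun ω => gpath (x ω) T n (i + 1)) = fun ω => x ω (grid T n i) := by
            funext ω
            simp only [gpath, if_neg (Nat.succ_ne_zero i), Nat.add_sub_cancel]
          rw [this]
          exact hx.adapted (grid T n i)
        · by_cases hi0 : i = 0
          · have : (fun ω => gpath (x ω) T n i) = fun _ => (0:ℝ) := by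
              funext ω; simp [gpath, hi0]
            rw [this]
            exact measurable_const
          · have : (fun ω => gpath (x ω) T n i) = fun ω => x ω (grid T n (i - 1)) := by
              funext ω; simp [gpath, hi0]
            rw [this]
            exact (hx.adapted (grid T n (i - 1))).mono
              (ℱ.mono (grid_mono hT (by omega))) le_rfl
      exact hrep _ hst _ hdst (hdint n i)
    rw [Finset.sum_congr rfl hterm]
    rw [← integral_finset_sum]
    intro i _
    apply (hdint n i).bdd_mul (hψmeas (grid T n i)).aestronglyMeasurable (c := C)
    filter_upwards [hbdd] with ω hω
    rw [Real.norm_eq_abs, abs_of_nonneg (hpos ω _)]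
    exact hω _ (grid_mem hT (Nat.lt_succ_iff.mp (Finset.mem_range.mp ‹i ∈ _›)))
  -- a.e. convergence of the sums to the Stieltjes integral
  have hSconv : ∀ᵐ ω ∂P, Tendsto (fun n => S n ω) atTop
      (nhds (∫ t in Set.Icc 0 T, ψ ω t ∂(pathMeasure (x ω)))) := by
    filter_upwards [hbdd] with ω hψC
    have h1 : ∀ n, S n ω = ∫ t in Set.Icc 0 T, ψ ω (gceil T n t) ∂(pathMeasure (x ω)) :=
      fun n => (integral_gceil_eq_sum hT (hxmono ω) (hxrc ω) (hxzero ω) (ψ ω) n).symm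
    have h2 := tendsto_integral_gceil hT (hxmono ω) (hxrc ω) (hxzero ω)
      (ψω := ψ ω) (C := C) (hcad ω).1
      (fun t ht => by rw [abs_of_nonneg (hpos ω t)]; exact hψC t ht)
    exact h2.congr fun n => (h1 n).symm
  -- dominated convergence over Ω
  have hSbound : ∀ n, ∀ᵐ ω ∂P, ‖S n ω‖ ≤ C * x ω T := by
    intro n
    filter_upwards [hbdd] with ω hψC
    have hnn : 0 ≤ S n ω :=
      Finset.sum_nonneg fun i _ => mul_nonneg (hpos ω _) (hdnn n i ω)
    rw [Real.norm_eq_abs, abs_of_nonneg hnn, hS]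
    calc ∑ i ∈ Finset.range (2 ^ n + 1), ψ ω (grid T n i) * d n i ω
        ≤ ∑ i ∈ Finset.range (2 ^ n + 1), C * d n i ω := by
          apply Finset.sum_le_sum
          intro i hi
          exact mul_le_mul_of_nonneg_right
            (hψC _ (grid_mem hT (Nat.lt_succ_iff.mp (Finset.mem_range.mp hi))))
            (hdnn n i ω)
      _ = C * x ω T := by rw [← Finset.mul_sum, hsum_d n ω]
  have hmain : Tendsto (fun n => ∫ ω, S n ω ∂P) atTop (nhds (pairPlan P T ψ x)) := by
    exact tendsto_integral_of_dominated_convergence (fun ω => C * x ω T)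
      (fun n => (hSmeas n).aestronglyMeasurable) (hxTint.const_mul C) hSbound hSconv
  -- convergence in the intertemporal norm
  have hinorm : Tendsto (fun n => inorm P T 1 (xn n - x)) atTop (nhds 0) := by
    have hval : ∀ n, inorm P T 1 (xn n - x)
        = ∫ ω, (∫ t in Set.Icc (0:ℝ) T, (x ω t - x ω (gfloor T n t))) ∂P := by
      intro n
      rw [inorm]
      have habs : ∀ ω t, |(xn n - x) ω t| = x ω t - x ω (gfloor T n t) := by
        intro ω t
        simp only [Pi.sub_apply, hxn]
        rw [abs_sub_comm, abs_of_nonneg (sub_nonneg.2 (hxmono ω (gfloor_le hT t)))]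
      simp only [ENNReal.toReal_one, Real.rpow_one, habs, gfloor_T hT, sub_self, add_zero]
      rw [show (1:ℝ)/1 = 1 by norm_num, Real.rpow_one]
    rw [funext hval]
    have blo : ∀ n, (0:ℝ) ≤ ∫ ω, (∫ t in Set.Icc (0:ℝ) T,
        (x ω t - x ω (gfloor T n t))) ∂P :=
      fun n => integral_nonneg fun ω => integral_nonneg fun t =>
        sub_nonneg.2 (hxmono ω (gfloor_le hT t))
    have bhi : ∀ n, ∫ ω, (∫ t in Set.Icc (0:ℝ) T, (x ω t - x ω (gfloor T n t))) ∂P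
        ≤ T / 2 ^ n * ∫ ω, x ω T ∂P := by
      intro n
      calc ∫ ω, (∫ t in Set.Icc (0:ℝ) T, (x ω t - x ω (gfloor T n t))) ∂P
          ≤ ∫ ω, T / 2 ^ n * x ω T ∂P := by
            apply integral_mono_of_nonneg
            · exact Filter.Eventually.of_forall fun ω => integral_nonneg fun t =>
                sub_nonneg.2 (hxmono ω (gfloor_le hT t))
            · exact hxTint.const_mul _
            · exact Filter.Eventually.of_forall fun ω =>
                integral_gfloor_diff_le hT (hxmono ω) (hxzero ω) (hxconst ω) n
        _ = T / 2 ^ n * ∫ ω, x ω T ∂P := integral_const_mul _ _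
    apply tendsto_of_tendsto_of_tendsto_of_le_of_le tendsto_const_nhds _ blo bhi
    have := (tendsto_div_two_pow T).mul_const (∫ ω, x ω T ∂P)
    simpa using this
  -- conclusion
  have hlim1 : Tendsto (fun n => π (xn n)) atTop (nhds (π x)) :=
    hcomp x hx xn hplan hinorm
  have hlim2 : Tendsto (fun n => π (xn n)) atTop (nhds (pairPlan P T ψ x)) := by
    rw [funext hπn]
    exact hmain
  exact tendsto_nhds_unique hlim1 hlim2

end Equil
end
end

section
/- Let x ∈ E_+ and for k > 0 define the truncated plan x_k by x_k(t) = min(x_t, k) for t ∈ [0,T]. Then x_k ∈ E_+ and x − x_k ∈ E_+; the pathwise total variation of x − x_k equals (x_T − k)⁺, so that E‖x − x_k‖_TV = E[(x_T − k)⁺] → 0 as k → ∞; and for almost every ω, for every nonnegative Borel-measurable function f on [0,T], ∫_{[0,T]} f d x_k(ω) → ∫_{[0,T]} f dx(ω) as k → ∞. -/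
open MeasureTheory Set Filter
open scoped ENNReal Topology Classical

noncomputable section

namespace Equil

variable {Ω : Type*} [m : MeasurableSpace Ω]

private lemma sub_min_eq_max (a b : ℝ) : a - min a b = max (a - b) 0 := by
  rcases le_total a b with h | h
  · rw [min_eq_left h, sub_self, max_eq_right (sub_nonpos.2 h)]
  · rw [min_eq_right h, max_eq_left (sub_nonneg.2 h)]

private lemma eVariationOn_monotone {f : ℝ → ℝ} {T : ℝ} (hT : 0 ≤ T)
    (hf : Monotone f) :
    eVariationOn f (Set.Icc 0 T) = ENNReal.ofReal (f T - f 0) := by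
  apply le_antisymm
  · have := (hf.monotoneOn (Set.Icc 0 T)).eVariationOn_le
      (a := 0) (b := T) ⟨le_rfl, hT⟩ ⟨hT, le_rfl⟩
    rwa [Set.inter_self] at this
  · have := eVariationOn.edist_le f (s := Set.Icc (0:ℝ) T)
      (show T ∈ Set.Icc (0:ℝ) T from ⟨hT, le_rfl⟩)
      (show (0:ℝ) ∈ Set.Icc (0:ℝ) T from ⟨le_rfl, hT⟩)
    rwa [edist_dist, Real.dist_eq, abs_of_nonneg (sub_nonneg.2 (hf hT))] at this

/-- properties of the truncated plans `x_k = min(x, k)`. -/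
theorem truncation_properties
    {Ω : Type*} [m : MeasurableSpace Ω] (P : Measure Ω) [IsProbabilityMeasure P]
    (ℱ : Filtration ℝ m) (T : ℝ) (hT : 0 < T)
    (p : ℝ≥0∞) (hp : 1 ≤ p) (hp' : p ≠ ∞)
    (x : Ω → ℝ → ℝ) (hx : IsPlan P ℱ T p x) :
    (∀ k : ℝ, 0 < k → IsPlan P ℱ T p (fun ω t => min (x ω t) k)) ∧
    (∀ k : ℝ, 0 < k → IsPlan P ℱ T p (fun ω t => x ω t - min (x ω t) k)) ∧
    (∀ k : ℝ, 0 < k → ∀ ω,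
      pathTV T (fun t => x ω t - min (x ω t) k) = max (x ω T - k) 0) ∧
    (∀ k : ℝ, 0 < k →
      strongNorm P T (fun ω t => x ω t - min (x ω t) k) =
        ∫ ω, max (x ω T - k) 0 ∂P) ∧
    Tendsto (fun k : ℝ => strongNorm P T (fun ω t => x ω t - min (x ω t) k))
      atTop (nhds 0) ∧
    ∀ᵐ ω ∂P, ∀ f : ℝ → ℝ≥0∞, Measurable f →
      Tendsto
        (fun k : ℝ =>
          ∫⁻ t in Set.Icc (0 : ℝ) T, f t ∂(pathMeasure fun t => min (x ω t) k))
        atTop (nhds (∫⁻ t in Set.Icc (0 : ℝ) T, f t ∂(pathMeasure (x ω)))) := by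
  -- basic facts about the plan `x`
  have hnonneg : ∀ ω t, 0 ≤ x ω t := by
    intro ω t
    rcases lt_or_ge t 0 with h | h
    · rw [hx.zero_neg ω t h]
    · calc (0:ℝ) = x ω (-1) := (hx.zero_neg ω (-1) (by norm_num)).symm
        _ ≤ x ω t := hx.mono ω (by linarith)
  have hleT : ∀ ω t, x ω t ≤ x ω T := by
    intro ω t
    rcases le_total t T with h | h
    · exact hx.mono ω h
    · exact le_of_eq (hx.const_ge ω t h)
  have hxTmeas : Measurable fun ω => x ω T :=
    (hx.adapted T).mono (ℱ.le T) le_rfl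
  -- the truncated plan
  have h1 : ∀ k : ℝ, 0 < k → IsPlan P ℱ T p (fun ω t => min (x ω t) k) := by
    intro k hk
    refine ⟨fun ω => (hx.mono ω).min monotone_const,
      fun ω t => (hx.right_cont ω t).min continuousWithinAt_const,
      fun ω t ht => by rw [hx.zero_neg ω t ht, min_eq_left hk.le],
      fun ω t ht => by rw [hx.const_ge ω t ht],
      fun t => (hx.adapted t).min measurable_const, ?_⟩
    refine hx.memLp.of_le ((hxTmeas.min measurable_const).aestronglyMeasurable)
      (Filter.Eventually.of_forall fun ω => ?_)
    rw [Real.norm_eq_abs, Real.norm_eq_abs,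
      abs_of_nonneg (le_min (hnonneg ω T) hk.le), abs_of_nonneg (hnonneg ω T)]
    exact min_le_left _ _
  -- the remainder plan
  have h2 : ∀ k : ℝ, 0 < k →
      IsPlan P ℱ T p (fun ω t => x ω t - min (x ω t) k) := by
    intro k hk
    have hmax : ∀ ω t, x ω t - min (x ω t) k = max (x ω t - k) 0 :=
      fun ω t => sub_min_eq_max _ _
    refine ⟨?_, fun ω t => (hx.right_cont ω t).sub
        ((hx.right_cont ω t).min continuousWithinAt_const),
      fun ω t ht => by rw [hx.zero_neg ω t ht, min_eq_left hk.le, sub_zero],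
      fun ω t ht => by rw [hx.const_ge ω t ht],
      fun t => (hx.adapted t).sub ((hx.adapted t).min measurable_const), ?_⟩
    · intro ω s t hst
      simp only [hmax]
      exact max_le_max (sub_le_sub_right (hx.mono ω hst) k) le_rfl
    · refine hx.memLp.of_le
        ((hxTmeas.sub (hxTmeas.min measurable_const)).aestronglyMeasurable)
        (Filter.Eventually.of_forall fun ω => ?_)
      rw [hmax, Real.norm_eq_abs, Real.norm_eq_abs,
        abs_of_nonneg (le_max_right _ _), abs_of_nonneg (hnonneg ω T)]
      exact max_le (by linarith [hnonneg ω T]) (hnonneg ω T)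
  -- total variation of the remainder
  have h3 : ∀ k : ℝ, 0 < k → ∀ ω,
      pathTV T (fun t => x ω t - min (x ω t) k) = max (x ω T - k) 0 := by
    intro k hk ω
    have hmax : (fun t => x ω t - min (x ω t) k) = fun t => max (x ω t - k) 0 :=
      funext fun t => sub_min_eq_max _ _
    have hmono : Monotone fun t => max (x ω t - k) 0 := fun s t hst =>
      max_le_max (sub_le_sub_right (hx.mono ω hst) k) le_rfl
    rw [hmax]
    simp only [pathTV]
    rw [eVariationOn_monotone hT.le hmono,
      ENNReal.toReal_ofReal (sub_nonneg.2 (hmono (le_of_lt hT))),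
      abs_of_nonneg (le_max_right _ _)]
    ring
  -- strong norm of the remainder
  have h4 : ∀ k : ℝ, 0 < k →
      strongNorm P T (fun ω t => x ω t - min (x ω t) k) =
        ∫ ω, max (x ω T - k) 0 ∂P := by
    intro k hk
    exact integral_congr_ae (Filter.Eventually.of_forall fun ω => h3 k hk ω)
  -- convergence of the strong norm to zero
  have h5 : Tendsto (fun k : ℝ => strongNorm P T (fun ω t => x ω t - min (x ω t) k))
      atTop (nhds 0) := by
    have key : Tendsto (fun k : ℝ => ∫ ω, max (x ω T - k) 0 ∂P) atTop (nhds 0) := by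
      have := MeasureTheory.tendsto_integral_filter_of_dominated_convergence
        (μ := P) (l := (atTop : Filter ℝ)) (F := fun k ω => max (x ω T - k) 0)
        (f := fun _ => (0:ℝ)) (bound := fun ω => |x ω T|)
        (Filter.Eventually.of_forall fun k =>
          ((hxTmeas.sub_const k).max measurable_const).aestronglyMeasurable)
        ?_ (hx.memLp.integrable hp).abs ?_
      · simpa using this
      · filter_upwards [Filter.eventually_ge_atTop (0:ℝ)] with k hk
        refine Filter.Eventually.of_forall fun ω => ?_
        rw [Real.norm_eq_abs, abs_of_nonneg (le_max_right _ _),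
          abs_of_nonneg (hnonneg ω T)]
        exact max_le (by linarith [hnonneg ω T]) (hnonneg ω T)
      · refine Filter.Eventually.of_forall fun ω => ?_
        refine Tendsto.congr' ?_ tendsto_const_nhds
        filter_upwards [Filter.eventually_ge_atTop (x ω T)] with k hk
        exact (max_eq_right (by linarith)).symm
    refine key.congr' ?_
    filter_upwards [Filter.eventually_gt_atTop (0:ℝ)] with k hk
    exact (h4 k hk).symm
  refine ⟨h1, h2, h3, h4, h5, ?_⟩
  -- pathwise convergence of the truncated measures
  refine Filter.Eventually.of_forall fun ω => ?_
  intro f hf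
  refine Tendsto.congr' ?_ tendsto_const_nhds
  filter_upwards [Filter.eventually_ge_atTop (x ω T)] with k hk
  have : (fun t => min (x ω t) k) = x ω :=
    funext fun t => min_eq_left ((hleT ω t).trans hk)
  rw [this]

end Equil
end
end
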